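/- arXiv:2106.16130 — 5 statements merged into one kernel-verified Lean document; each statement's English description precedes it below -/
import Mathlib

section
/- Let G be a connected graph on n vertices with tree-depth at most td. Then δ(A(G)) ≤ 2·td·n. -/
open SimpleGraph

/-- A search tree (elimination tree) on a graph `G`, encoded by its ancestor
relation: `anc u v` means that `u` is an ancestor of `v` (possibly `u = v`).
Equivalently (for connected `G`): the root is a vertex `r`, joined to the roots
of search trees on each connected component of `G - r`. -/
structure SearchTree {V : Type} (G : SimpleGraph V) : Type where
  anc : V → V → Prop
  refl : ∀ v, anc v v
  antisymm : ∀ u v, anc u v → anc v u → u = v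
  trans : ∀ u v w, anc u v → anc v w → anc u w
  chain : ∀ u v w, anc u w → anc v w → anc u v ∨ anc v u
  root : ∃ r, ∀ v, anc r v
  edge_comparable : ∀ u v, G.Adj u v → anc u v ∨ anc v u
  desc_connected : ∀ v, (G.induce {u | anc v u}).Connected

namespace SearchTree

/-- The set of descendants of `v` (including `v`): the vertex set of the
subtree rooted at `v`. -/
def descSet {V : Type} {G : SimpleGraph V} (T : SearchTree G) (v : V) : Set V :=
  {u | T.anc v u}

/-- The height of a search tree: the maximal number of vertices on a
root-to-leaf path (a single-vertex tree has height 1). -/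
noncomputable def height {V : Type} [Fintype V] {G : SimpleGraph V} (T : SearchTree G) : ℕ :=
  Finset.univ.sup fun v => Set.ncard {u | T.anc u v}

end SearchTree

/-- `T'` is obtained from `T` by a rotation at a vertex `b` with parent `a`:
the subtree of `T` rooted at `a` (with vertex set `A`) becomes rooted at `b`,
`a` becomes the root of the component of `G[A] - b` containing `a`, and all
other subtrees are unchanged. The rotation is said to involve `a` and `b`. -/
def IsRotation {V : Type} {G : SimpleGraph V} (T T' : SearchTree G) (a b : V) : Prop :=
  a ≠ b ∧ T.anc a b ∧ T'.descSet b = T.descSet a ∧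
    ∀ v, v ≠ a → v ≠ b → T'.descSet v = T.descSet v

/-- The rotation graph of `G`: vertices are the search trees on `G`, two
trees being adjacent when they differ by a single rotation. It is the skeleton
of the graph associahedron `A(G)`; its diameter is `δ(A(G))`. -/
def rotationGraph {V : Type} (G : SimpleGraph V) : SimpleGraph (SearchTree G) where
  Adj T T' := ∃ a b, IsRotation T T' a b
  symm := by
    constructor
    rintro T T' ⟨a, b, hne, hanc, hb, hoth⟩
    have hanc' : T'.anc b a := by
      have ha : a ∈ T'.descSet b := by rw [hb]; exact T.refl a
      exact ha
    exact ⟨b, a, hne.symm, hanc', hb.symm, fun v h1 h2 => (hoth v h2 h1).symm⟩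
  loopless := by
    constructor
    rintro T ⟨a, b, hne, hanc, hb, hoth⟩
    have h : T.anc b a := by
      have ha : a ∈ T.descSet b := by rw [hb]; exact T.refl a
      exact ha
    exact hne (T.antisymm a b hanc h)

/-- The tree-depth of `G`: the smallest height of a search tree on `G`. -/
noncomputable def treeDepth {V : Type} [Fintype V] (G : SimpleGraph V) : ℕ :=
  sInf {h | ∃ T : SearchTree G, T.height = h}

/-- Adding a universal vertex to a graph. -/
def addUniversal {V : Type} (G : SimpleGraph V) : SimpleGraph (Option V) where
  Adj x y := match x, y with
    | none, none => False
    | none, some _ => True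
    | some _, none => True
    | some a, some b => G.Adj a b
  symm := by
    constructor
    rintro (_ | a) (_ | b) h
    · exact h.elim
    · trivial
    · trivial
    · exact G.adj_symm h
  loopless := by
    constructor
    rintro (_ | a) h
    · exact h
    · exact G.irrefl h

/-- Disjoint union of two graphs. -/
def disjUnion {V W : Type} (G : SimpleGraph V) (H : SimpleGraph W) : SimpleGraph (V ⊕ W) where
  Adj x y := match x, y with
    | .inl a, .inl b => G.Adj a b
    | .inr a, .inr b => H.Adj a b
    | _, _ => False
  symm := by
    constructor
    rintro (a | a) (b | b) h
    · exact G.adj_symm h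
    · exact h.elim
    · exact h.elim
    · exact H.adj_symm h
  loopless := by
    constructor
    rintro (a | a) h
    · exact G.irrefl h
    · exact H.irrefl h

/-- Graphs built recursively from single vertices by adding universal vertices
and taking disjoint unions. -/
inductive TPBuild : {V : Type} → SimpleGraph V → Prop
  | single : TPBuild (⊥ : SimpleGraph PUnit)
  | addUniv {V : Type} {G : SimpleGraph V} : TPBuild G → TPBuild (addUniversal G)
  | union {V W : Type} {G : SimpleGraph V} {H : SimpleGraph W} :
      TPBuild G → TPBuild H → TPBuild (disjUnion G H)

/-- A graph is trivially perfect if it can be built recursively from single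
vertices by repeatedly adding universal vertices and taking disjoint unions. -/
def TriviallyPerfect {V : Type} (G : SimpleGraph V) : Prop :=
  ∃ (W : Type) (H : SimpleGraph W), TPBuild H ∧ Nonempty (G ≃g H)

/-- A graph is chordal if it has no induced cycle of length at least 4. -/
def Chordal {V : Type} (G : SimpleGraph V) : Prop :=
  ∀ n, 4 ≤ n → IsEmpty (cycleGraph n ↪g G)

/-- The treewidth of `G`: one less than the smallest clique number of a chordal
supergraph of `G` on the same vertex set. -/
noncomputable def treewidth {V : Type} (G : SimpleGraph V) : ℕ :=
  sInf {k | ∃ H : SimpleGraph V, G ≤ H ∧ Chordal H ∧ H.cliqueNum = k + 1}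

/-- An interval graph: the intersection graph of closed intervals on the real line. -/
def IsIntervalGraph {V : Type} (G : SimpleGraph V) : Prop :=
  ∃ lo hi : V → ℝ, (∀ v, lo v ≤ hi v) ∧
    ∀ u v, G.Adj u v ↔ u ≠ v ∧ lo u ≤ hi v ∧ lo v ≤ hi u

/-- The pathwidth of `G`: one less than the smallest clique number of an
interval supergraph of `G` on the same vertex set. -/
noncomputable def pathwidth {V : Type} (G : SimpleGraph V) : ℕ :=
  sInf {k | ∃ H : SimpleGraph V, G ≤ H ∧ IsIntervalGraph H ∧ H.cliqueNum = k + 1}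

/-- A vertex is simplicial if its neighborhood induces a clique. -/
def Simplicial {V : Type} (G : SimpleGraph V) (v : V) : Prop :=
  G.IsClique (G.neighborSet v)

/-- A set of vertices is (monophonically) convex if it can be obtained from the
full vertex set by iteratively deleting a simplicial vertex of the current
induced subgraph. -/
inductive MConvex {V : Type} (G : SimpleGraph V) : Set V → Prop
  | univ : MConvex G Set.univ
  | delete {S : Set V} {v : V} (hS : MConvex G S) (hv : v ∈ S)
      (hsimp : Simplicial (G.induce S) ⟨v, hv⟩) : MConvex G (S \ {v})

/-- `P` is the projection of the search tree `T` on the convex set `S`: the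
search tree on `G[S]` obtained from `T` by iteratively deleting the vertices
outside `S`; its ancestor relation is the restriction of that of `T`. -/
def IsProjection {V : Type} {G : SimpleGraph V} (S : Set V) (T : SearchTree G)
    (P : SearchTree (G.induce S)) : Prop :=
  ∀ u v : S, P.anc u v ↔ T.anc (↑u) (↑v)

/-- The complete split graph `SPK p q`: a clique `P` of `p` vertices, an
independent set `Q` of `q` vertices, and all edges between `P` and `Q`. -/
def SPK (p q : ℕ) : SimpleGraph (Fin p ⊕ Fin q) where
  Adj x y := x ≠ y ∧ (x.isLeft ∨ y.isLeft)
  symm := by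
    constructor
    rintro x y ⟨h1, h2⟩
    exact ⟨h1.symm, h2.symm⟩
  loopless := by
    constructor
    rintro x ⟨h, _⟩
    exact h rfl
variable {V : Type} {G : SimpleGraph V}

/-- Reachability within a vertex set `S`, via walks whose support lies in `S`. -/
def WReach (G : SimpleGraph V) (S : Set V) (x y : V) : Prop :=
  ∃ p : G.Walk x y, ∀ z ∈ p.support, z ∈ S

lemma WReach.mem_left {S : Set V} {x y : V} (h : WReach G S x y) : x ∈ S := by
  obtain ⟨p, hp⟩ := h; exact hp x p.start_mem_support

lemma WReach.mem_right {S : Set V} {x y : V} (h : WReach G S x y) : y ∈ S := by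
  obtain ⟨p, hp⟩ := h; exact hp y p.end_mem_support

lemma wreach_refl {S : Set V} {x : V} (hx : x ∈ S) : WReach G S x x :=
  ⟨.nil, by simpa using hx⟩

lemma WReach.symm {S : Set V} {x y : V} (h : WReach G S x y) : WReach G S y x := by
  obtain ⟨p, hp⟩ := h
  exact ⟨p.reverse, by simpa using hp⟩

lemma WReach.trans {S : Set V} {x y z : V} (h : WReach G S x y) (h' : WReach G S y z) :
    WReach G S x z := by
  obtain ⟨p, hp⟩ := h; obtain ⟨q, hq⟩ := h'
  refine ⟨p.append q, fun w hw => ?_⟩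
  rcases (Walk.mem_support_append_iff _ _).1 hw with h | h
  exacts [hp w h, hq w h]

lemma WReach.mono {S S' : Set V} (hss : S ⊆ S') {x y : V} (h : WReach G S x y) :
    WReach G S' x y := by
  obtain ⟨p, hp⟩ := h; exact ⟨p, fun z hz => hss (hp z hz)⟩

lemma WReach.step {S : Set V} {x y z : V} (h : WReach G S x y) (hadj : G.Adj y z)
    (hz : z ∈ S) : WReach G S x z :=
  h.trans ⟨hadj.toWalk, by
    simp only [Walk.support_cons, Walk.support_nil, List.mem_cons, List.mem_singleton]
    rintro w (rfl | rfl | h)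
    · exact h.mem_right
    · exact hz
    · simp at h⟩

/-- Every vertex on a witnessing walk is itself `WReach`-able. -/
lemma WReach.of_mem_support {S : Set V} {x y : V} (p : G.Walk x y)
    (hp : ∀ z ∈ p.support, z ∈ S) {z : V} (hz : z ∈ p.support) : WReach G S x z := by
  classical
  exact ⟨p.takeUntil z hz, fun w hw => hp w (p.support_takeUntil_subset hz hw)⟩

lemma wreach_of_reachable_induce {S : Set V} {x y : S}
    (h : (G.induce S).Reachable x y) : WReach G S (↑x) (↑y) := by
  obtain ⟨p⟩ := h
  induction p with
  | @nil u => exact wreach_refl u.2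
  | @cons u b w hadj q ih => exact (ih.symm.step hadj.symm u.2).symm

lemma reachable_induce_of_wreach {S : Set V} {x y : V} (h : WReach G S x y) :
    (G.induce S).Reachable ⟨x, h.mem_left⟩ ⟨y, h.mem_right⟩ := by
  obtain ⟨p, hp⟩ := h
  induction p with
  | nil => rfl
  | @cons a b c hadj q ih =>
      have hb : b ∈ S := hp b (by simp)
      have h1 : (G.induce S).Adj ⟨a, hp a (by simp)⟩ ⟨b, hb⟩ := hadj
      exact h1.reachable.trans (ih (fun z hz => hp z (by simp [hz])))

namespace SearchTree

variable {V : Type} {G : SimpleGraph V} (T : SearchTree G)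

lemma mem_descSet {u v : V} : v ∈ T.descSet u ↔ T.anc u v := Iff.rfl

lemma mem_descSet_self (v : V) : v ∈ T.descSet v := T.refl v

lemma descSet_subset {u v : V} (h : T.anc u v) : T.descSet v ⊆ T.descSet u :=
  fun _ hx => T.trans _ _ _ h hx

lemma descSet_connected (v : V) : (G.induce (T.descSet v)).Connected :=
  T.desc_connected v

/-- Within the descendant set of `u`, any two vertices are `WReach`-connected. -/
lemma wreach_descSet {u x y : V} (hx : T.anc u x) (hy : T.anc u y) :
    WReach G (T.descSet u) x y := by
  have h := ((T.desc_connected u).preconnected ⟨x, hx⟩ ⟨y, hy⟩)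
  exact wreach_of_reachable_induce h

/-- Existence of the parent: the deepest strict ancestor. -/
lemma exists_parent [Fintype V] {v u₀ : V} (h0 : T.anc u₀ v) (hne : u₀ ≠ v) :
    ∃ a, a ≠ v ∧ T.anc a v ∧ ∀ u, T.anc u v → u = v ∨ T.anc u a := by
  classical
  set s : Finset V := Finset.univ.filter (fun u => T.anc u v ∧ u ≠ v) with hs
  have hne' : s.Nonempty := ⟨u₀, by simp [hs, h0, hne]⟩
  obtain ⟨a, has, hmin⟩ := s.exists_min_image (fun u => (T.descSet u).ncard) hne'
  simp only [hs, Finset.mem_filter, Finset.mem_univ, true_and] at has hmin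
  refine ⟨a, has.2, has.1, fun u hu => ?_⟩
  by_cases huv : u = v
  · exact Or.inl huv
  · right
    rcases T.chain u a v hu has.1 with h | h
    · -- anc u a : then a's descSet ⊆ u's, need anc u a... this *is* the goal
      exact h
    · -- anc a u : then descSet u ⊆ descSet a ; minimality forces u = a
      by_cases hua : u = a
      · exact hua ▸ T.refl a
      · exfalso
        have hsub : T.descSet u ⊂ T.descSet a :=
          ⟨T.descSet_subset h, fun hle => hua (T.antisymm _ _ (hle (T.mem_descSet_self a)) h)⟩
        have := Set.ncard_lt_ncard hsub (Set.toFinite _)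
        have h2 := hmin u ⟨hu, huv⟩
        omega

/-- The descendant set of a child is exactly the connected component of the
child inside the parent's descendant set with the parent removed. -/
lemma descSet_eq_component {a v : V} (hne : a ≠ v) (hanc : T.anc a v)
    (hpar : ∀ u, T.anc u v → u = v ∨ T.anc u a) :
    T.descSet v = {x | WReach G (T.descSet a \ {a}) v x} := by
  have hsub : T.descSet v ⊆ T.descSet a \ {a} := by
    intro x hx
    refine ⟨T.descSet_subset hanc hx, ?_⟩
    rintro rfl
    exact hne (T.antisymm _ _ hanc hx)
  apply Set.eq_of_subset_of_subset
  · intro x hx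
    exact (T.wreach_descSet (T.refl v) hx).mono hsub
  · -- closure of descSet v under edges within descSet a \ {a}
    have closed : ∀ x y, x ∈ T.descSet v → G.Adj x y → y ∈ T.descSet a \ {a} →
        y ∈ T.descSet v := by
      rintro x y hx hadj ⟨hyA, hya⟩
      rcases T.edge_comparable x y hadj with h | h
      · exact T.trans _ _ _ hx h
      · rcases T.chain y v x h hx with h2 | h2
        · rcases hpar y h2 with rfl | h3
          · exact T.refl _
          · exact absurd (T.antisymm _ _ h3 hyA) hya
        · exact h2
    have main : ∀ (x y : V) (p : G.Walk x y), (∀ z ∈ p.support, z ∈ T.descSet a \ {a}) →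
        x ∈ T.descSet v → y ∈ T.descSet v := by
      intro x y p
      induction p with
      | nil => exact fun _ h => h
      | @cons u b w hadj q ih =>
          intro hp hu
          exact ih (fun z hz => hp z (by simp [hz])) (closed u b hu hadj (hp b (by simp)))
    rintro x ⟨p, hp⟩
    exact main v x p hp (T.refl v)

end SearchTree

namespace SearchTree

open scoped Classical in
/-- Descendant sets after rotating `v` with its parent `a`. -/
noncomputable def rotDesc {V : Type} {G : SimpleGraph V} (T : SearchTree G) (a v u : V) :
    Set V :=
  if u = v then T.descSet a
  else if u = a then {x | WReach G (T.descSet a \ {v}) a x}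
  else T.descSet u

variable {V : Type} {G : SimpleGraph V}

/-- The new descendant set of `a` after rotating: the component of `a` in
`G[descSet a] - v`. -/
def rotB (T : SearchTree G) (a v : V) : Set V :=
  {x | WReach G (T.descSet a \ {v}) a x}

variable (T : SearchTree G) {a v : V}

lemma rotDesc_eq_v {u : V} (h : u = v) : rotDesc T a v u = T.descSet a := by
  simp [rotDesc, h]

lemma rotDesc_eq_a {u : V} (hne : a ≠ v) (h : u = a) : rotDesc T a v u = rotB T a v := by
  subst h; simp [rotDesc, rotB, hne]

lemma rotDesc_eq_other {u : V} (h1 : u ≠ v) (h2 : u ≠ a) : rotDesc T a v u = T.descSet u := by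
  simp [rotDesc, h1, h2]

section RotLemmas

variable (hne : a ≠ v) (hanc : T.anc a v)
  (hpar : ∀ u, T.anc u v → u = v ∨ T.anc u a)

include hne in
lemma a_mem_rotB : a ∈ rotB T a v := wreach_refl ⟨T.mem_descSet_self a, hne⟩

lemma rotB_subset_sdiff : rotB T a v ⊆ T.descSet a \ {v} := fun _ hx => hx.mem_right

include hpar in
lemma v_not_mem_descSet {w : V} (hw : T.anc a w) (hwa : w ≠ a) (hwv : w ≠ v) :
    v ∉ T.descSet w := by
  intro hv
  rcases hpar w hv with h | h
  · exact hwv h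
  · exact hwa (T.antisymm _ _ h hw)

include hpar in
lemma descSet_subset_sdiff {w : V} (hw : T.anc a w) (hwa : w ≠ a) (hwv : w ≠ v) :
    T.descSet w ⊆ T.descSet a \ {v} := by
  intro x hx
  refine ⟨T.trans _ _ _ hw hx, ?_⟩
  intro hxv
  rw [Set.mem_singleton_iff] at hxv
  exact v_not_mem_descSet T hpar hw hwa hwv (hxv ▸ hx)

include hpar in
lemma descSet_subset_rotB {w x : V} (hw : T.anc a w) (hwa : w ≠ a) (hwv : w ≠ v)
    (hx : T.anc w x) (hxB : x ∈ rotB T a v) : T.descSet w ⊆ rotB T a v := by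
  intro y hy
  have h1 : WReach G (T.descSet w) x y := T.wreach_descSet hx hy
  exact hxB.trans (h1.mono (descSet_subset_sdiff T hpar hw hwa hwv))

include hne hanc hpar in
lemma rotDesc_mono : ∀ u w, w ∈ rotDesc T a v u → rotDesc T a v w ⊆ rotDesc T a v u := by
  intro u w hw
  by_cases huv : u = v
  · rw [rotDesc_eq_v T huv] at hw ⊢
    by_cases hwv : w = v
    · rw [rotDesc_eq_v T hwv]
    · by_cases hwa : w = a
      · rw [rotDesc_eq_a T hne hwa]
        exact fun x hx => (rotB_subset_sdiff T hx).1
      · rw [rotDesc_eq_other T hwv hwa]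
        exact T.descSet_subset hw
  · by_cases hua : u = a
    · rw [rotDesc_eq_a T hne hua] at hw ⊢
      have hwD := rotB_subset_sdiff T hw
      by_cases hwv : w = v
      · exact absurd hwD.2 (by simp [hwv])
      · by_cases hwa : w = a
        · rw [rotDesc_eq_a T hne hwa]
        · rw [rotDesc_eq_other T hwv hwa]
          exact descSet_subset_rotB T hpar hwD.1 hwa hwv (T.refl w) hw
    · rw [rotDesc_eq_other T huv hua] at hw
      by_cases hwv : w = v
      · rw [rotDesc_eq_v T hwv, rotDesc_eq_other T huv hua]
        rcases hpar u (hwv ▸ hw) with h | h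
        · exact absurd h huv
        · exact T.descSet_subset h
      · by_cases hwa : w = a
        · rw [rotDesc_eq_a T hne hwa, rotDesc_eq_other T huv hua]
          intro x hx
          have hw' : a ∈ T.descSet u := hwa ▸ hw
          exact T.descSet_subset hw' (rotB_subset_sdiff T hx).1
        · rw [rotDesc_eq_other T hwv hwa, rotDesc_eq_other T huv hua]
          exact T.descSet_subset hw

include hne hanc hpar in
lemma rotDesc_antisymm : ∀ u w, w ∈ rotDesc T a v u → u ∈ rotDesc T a v w → u = w := by
  have key : ∀ u w, u ≠ v → w ∈ rotDesc T a v u → u ∈ rotDesc T a v w → u = w := by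
    intro u w huv hw hu
    by_cases hwv : w = v
    · rw [rotDesc_eq_v T hwv] at hu
      by_cases hua : u = a
      · rw [rotDesc_eq_a T hne hua] at hw
        exact absurd (rotB_subset_sdiff T hw).2 (by simp [hwv])
      · rw [rotDesc_eq_other T huv hua] at hw
        rcases hpar u (hwv ▸ hw) with h | h
        · exact h.trans hwv.symm
        · exact absurd (T.antisymm _ _ h hu) hua
    · by_cases hua : u = a
      · rw [rotDesc_eq_a T hne hua] at hw
        by_cases hwa : w = a
        · exact hua.trans hwa.symm
        · rw [rotDesc_eq_other T hwv hwa] at hu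
          have h1 : T.anc u w := hua.symm ▸ (rotB_subset_sdiff T hw).1
          exact T.antisymm _ _ h1 hu
      · rw [rotDesc_eq_other T huv hua] at hw
        by_cases hwa : w = a
        · rw [rotDesc_eq_a T hne hwa] at hu
          have h1 : T.anc w u := hwa.symm ▸ (rotB_subset_sdiff T hu).1
          exact T.antisymm _ _ hw h1
        · rw [rotDesc_eq_other T hwv hwa] at hu
          exact T.antisymm _ _ hw hu
  intro u w hw hu
  by_cases huv : u = v
  · by_cases hwv : w = v
    · exact huv.trans hwv.symm
    · exact (key w u hwv hu hw).symm
  · exact key u w huv hw hu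

include hne hanc hpar in
lemma rotDesc_chain : ∀ u w x, x ∈ rotDesc T a v u → x ∈ rotDesc T a v w →
    w ∈ rotDesc T a v u ∨ u ∈ rotDesc T a v w := by
  have key : ∀ u w x, u ≠ v → w ≠ v → x ∈ rotDesc T a v u → x ∈ rotDesc T a v w →
      w ∈ rotDesc T a v u ∨ u ∈ rotDesc T a v w := by
    intro u w x huv hwv hxu hxw
    by_cases hua : u = a
    · rw [rotDesc_eq_a T hne hua] at hxu ⊢
      by_cases hwa : w = a
      · left; exact hwa.symm ▸ a_mem_rotB T hne
      · rw [rotDesc_eq_other T hwv hwa] at hxw ⊢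
        have hax : T.anc a x := (rotB_subset_sdiff T hxu).1
        rcases T.chain a w x hax hxw with h | h
        · left
          exact descSet_subset_rotB T hpar h hwa hwv hxw hxu (T.mem_descSet_self w)
        · right
          rw [hua]
          exact h
    · rw [rotDesc_eq_other T huv hua] at hxu
      by_cases hwa : w = a
      · rw [rotDesc_eq_a T hne hwa] at hxw ⊢
        have hax : T.anc a x := (rotB_subset_sdiff T hxw).1
        rcases T.chain a u x hax hxu with h | h
        · right
          exact descSet_subset_rotB T hpar h hua huv hxu hxw (T.mem_descSet_self u)
        · left
          rw [rotDesc_eq_other T huv hua, hwa]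
          exact h
      · rw [rotDesc_eq_other T hwv hwa] at hxw ⊢
        rw [rotDesc_eq_other T huv hua]
        exact T.chain u w x hxu hxw
  intro u w x hxu hxw
  by_cases huv : u = v
  · rw [rotDesc_eq_v T huv] at hxu ⊢
    by_cases hwv : w = v
    · left; exact hwv ▸ hanc
    · by_cases hwa : w = a
      · left; exact hwa ▸ T.mem_descSet_self a
      · rw [rotDesc_eq_other T hwv hwa] at hxw ⊢
        rcases T.chain a w x hxu hxw with h | h
        · left; exact h
        · right; exact T.trans _ _ _ h (huv ▸ hanc)
  · by_cases hwv : w = v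
    · rw [rotDesc_eq_v T hwv] at hxw ⊢
      by_cases hua : u = a
      · right; exact hua ▸ T.mem_descSet_self a
      · rw [rotDesc_eq_other T huv hua] at hxu ⊢
        rcases T.chain a u x hxw hxu with h | h
        · right; exact h
        · left; exact T.trans _ _ _ h (hwv ▸ hanc)
    · exact key u w x huv hwv hxu hxw

end RotLemmas

/-- The rotation of the search tree `T` at the vertex `v`, whose parent is `a`. -/
noncomputable def rotate (T : SearchTree G) (a v : V)
    (hne : a ≠ v) (hanc : T.anc a v)
    (hpar : ∀ u, T.anc u v → u = v ∨ T.anc u a) : SearchTree G where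
  anc u w := w ∈ rotDesc T a v u
  refl u := by
    show u ∈ rotDesc T a v u
    by_cases huv : u = v
    · rw [rotDesc_eq_v T huv]; exact huv ▸ hanc
    · by_cases hua : u = a
      · rw [rotDesc_eq_a T hne hua, hua]; exact a_mem_rotB T hne
      · rw [rotDesc_eq_other T huv hua]; exact T.refl u
  antisymm u w hw hu := rotDesc_antisymm T hne hanc hpar u w hw hu
  trans u w x hw hx := rotDesc_mono T hne hanc hpar u w hw hx
  chain u w x hu hw := rotDesc_chain T hne hanc hpar u w x hu hw
  root := by
    obtain ⟨r, hr⟩ := T.root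
    by_cases hra : r = a
    · refine ⟨v, fun w => ?_⟩
      show w ∈ rotDesc T a v v
      rw [rotDesc_eq_v T rfl]
      exact hra ▸ hr w
    · refine ⟨r, fun w => ?_⟩
      show w ∈ rotDesc T a v r
      have hrv : r ≠ v := by
        intro h
        exact hne (T.antisymm _ _ hanc (h ▸ hr a))
      rw [rotDesc_eq_other T hrv hra]
      exact hr w
  edge_comparable u w hadj := by
    show w ∈ rotDesc T a v u ∨ u ∈ rotDesc T a v w
    have hne' : u ≠ w := hadj.ne
    by_cases huv : u = v
    · rw [rotDesc_eq_v T huv]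
      rcases T.edge_comparable u w hadj with h | h
      · left; exact T.trans _ _ _ hanc (huv ▸ h)
      · rcases hpar w (huv ▸ h) with h2 | h2
        · exact absurd (huv.trans h2.symm) hne'
        · by_cases hwa : w = a
          · left; exact hwa ▸ T.mem_descSet_self a
          · right
            rw [rotDesc_eq_other T (fun hh => hne' (huv.trans hh.symm)) hwa]
            exact huv ▸ h
    · by_cases hua : u = a
      · by_cases hwv : w = v
        · right; rw [rotDesc_eq_v T hwv]; exact hua ▸ T.mem_descSet_self a
        · rw [rotDesc_eq_a T hne hua, rotDesc_eq_other T hwv (by rintro rfl; exact hne' hua)]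
          rcases T.edge_comparable u w hadj with h | h
          · left
            exact WReach.step (a_mem_rotB T hne) (hua ▸ hadj) ⟨hua ▸ h, hwv⟩
          · right; exact T.descSet_subset h (hua ▸ T.mem_descSet_self u)
      · by_cases hwv : w = v
        · rw [rotDesc_eq_v T hwv, rotDesc_eq_other T huv hua]
          rcases T.edge_comparable u w hadj with h | h
          · left; exact h
          · right; exact T.descSet_subset hanc (hwv ▸ h)
        · by_cases hwa : w = a
          · rw [rotDesc_eq_a T hne hwa, rotDesc_eq_other T huv hua]
            rcases T.edge_comparable u w hadj with h | h
            · left; exact hwa ▸ h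
            · right
              exact WReach.step (a_mem_rotB T hne) (hwa ▸ hadj.symm) ⟨hwa ▸ h, huv⟩
          · rw [rotDesc_eq_other T huv hua, rotDesc_eq_other T hwv hwa]
            exact T.edge_comparable u w hadj
  desc_connected u := by
    show (G.induce (rotDesc T a v u)).Connected
    by_cases huv : u = v
    · rw [rotDesc_eq_v T huv]; exact T.desc_connected a
    · by_cases hua : u = a
      · rw [rotDesc_eq_a T hne hua]
        have hstr : ∀ x, x ∈ rotB T a v → WReach G (rotB T a v) a x := by
          rintro x ⟨p, hp⟩
          exact ⟨p, fun z hz => WReach.of_mem_support p hp hz⟩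
        haveI : Nonempty ↥(rotB T a v) := ⟨⟨a, a_mem_rotB T hne⟩⟩
        refine ⟨fun x y => ?_⟩
        obtain ⟨x, hx⟩ := x
        obtain ⟨y, hy⟩ := y
        have h1 := (hstr x hx).symm.trans (hstr y hy)
        exact reachable_induce_of_wreach h1
      · rw [rotDesc_eq_other T huv hua]
        exact T.desc_connected u

end SearchTree

namespace SearchTree

variable {V : Type} {G : SimpleGraph V}

lemma rotate_descSet (T : SearchTree G) {a v : V} (hne : a ≠ v) (hanc : T.anc a v)
    (hpar : ∀ u, T.anc u v → u = v ∨ T.anc u a) (u : V) :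
    (rotate T a v hne hanc hpar).descSet u = rotDesc T a v u := rfl

lemma isRotation_rotate (T : SearchTree G) {a v : V} (hne : a ≠ v) (hanc : T.anc a v)
    (hpar : ∀ u, T.anc u v → u = v ∨ T.anc u a) :
    IsRotation T (rotate T a v hne hanc hpar) a v := by
  refine ⟨hne, hanc, ?_, fun w hwa hwv => ?_⟩
  · rw [rotate_descSet, rotDesc_eq_v T rfl]
  · rw [rotate_descSet, rotDesc_eq_other T hwv hwa]

lemma ext_of_descSet : ∀ {T T' : SearchTree G}, T.anc = T'.anc → T = T'
  | ⟨_, _, _, _, _, _, _, _⟩, ⟨_, _, _, _, _, _, _, _⟩, rfl => rfl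

lemma eq_of_descSet (T T' : SearchTree G) (h : ∀ u, T.descSet u = T'.descSet u) : T = T' := by
  apply ext_of_descSet
  funext u w
  apply propext
  constructor
  · intro hh
    have h1 : w ∈ T.descSet u := hh
    rw [h u] at h1
    exact h1
  · intro hh
    have h1 : w ∈ T'.descSet u := hh
    rw [← h u] at h1
    exact h1

/-- The potential of `T` relative to the target tree `T₀`: the total number of
pairs `(u, w)` with `u` a `T`-ancestor of `w` and a `T₀`-descendant of `w`. -/
noncomputable def pot [Fintype V] (T₀ T : SearchTree G) : ℕ :=
  ∑ w : V, ({u | T.anc u w ∧ T₀.anc w u}).ncard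

lemma exists_adj_pot_lt [Fintype V] (T₀ T : SearchTree G)
    (hd : ∃ w, T.descSet w ≠ T₀.descSet w) :
    ∃ T' : SearchTree G, (rotationGraph G).Adj T T' ∧ pot T₀ T' < pot T₀ T := by
  classical
  set s : Finset V := Finset.univ.filter (fun w => T.descSet w ≠ T₀.descSet w) with hs
  obtain ⟨w₀, hw₀⟩ := hd
  have hsne : s.Nonempty := ⟨w₀, by simp [hs, hw₀]⟩
  obtain ⟨v, hvs, hvmin⟩ := s.exists_min_image (fun w => ({u | T₀.anc u w}).ncard) hsne
  simp only [hs, Finset.mem_filter, Finset.mem_univ, true_and] at hvs hvmin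
  have nondisc : ∀ w, T₀.anc w v → w ≠ v → T.descSet w = T₀.descSet w := by
    intro w hwv hwvne
    by_contra hne'
    have h1 : {u | T₀.anc u w} ⊂ {u | T₀.anc u v} := by
      refine ⟨fun u hu => T₀.trans _ _ _ hu hwv, fun hle => ?_⟩
      exact hwvne (T₀.antisymm _ _ hwv (hle (T₀.refl v)))
    have h2 := Set.ncard_lt_ncard h1 (Set.toFinite _)
    have h3 := hvmin w (by simp [hs, hne'])
    omega
  -- v is not the root of T
  have hvnotroot : ∃ u, T.anc u v ∧ u ≠ v := by
    obtain ⟨r, hr⟩ := T.root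
    by_cases hrv : r = v
    · -- then descSet v = univ, so T₀'s root is a strict T₀-ancestor of v
      have hDv : T.descSet v = Set.univ := Set.eq_univ_of_forall (hrv ▸ hr)
      obtain ⟨r₀, hr₀⟩ := T₀.root
      have hr₀v : r₀ ≠ v := by
        rintro rfl
        exact hvs (hDv.trans (Set.eq_univ_of_forall hr₀).symm)
      have hD := nondisc r₀ (hr₀ v) hr₀v
      have hT : T.anc r₀ v := by
        have : v ∈ T₀.descSet r₀ := hr₀ v
        rw [← hD] at this
        exact this
      have : T.anc v r₀ := hrv ▸ hr r₀
      exact absurd (T.antisymm _ _ hT this) hr₀v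
    · exact ⟨r, hr v, hrv⟩
  obtain ⟨u₀, hu₀, hu₀ne⟩ := hvnotroot
  obtain ⟨a, hav, hanc, hpar⟩ := T.exists_parent hu₀ hu₀ne
  -- a is not a T₀-ancestor of v
  have hnot : ¬ T₀.anc a v := by
    intro h0
    have hDa : T.descSet a = T₀.descSet a := nondisc a h0 hav
    have hpar₀ : ∀ u, T₀.anc u v → u = v ∨ T₀.anc u a := by
      intro u hu
      by_cases huv : u = v
      · exact Or.inl huv
      · right
        have hDu : T.descSet u = T₀.descSet u := nondisc u hu huv
        have hTu : T.anc u v := by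
          have : v ∈ T₀.descSet u := hu
          rw [← hDu] at this; exact this
        rcases hpar u hTu with h | h
        · exact absurd h huv
        · have h1 : a ∈ T.descSet u := h
          rw [hDu] at h1
          exact h1
    have e1 := T.descSet_eq_component hav hanc hpar
    have e2 := T₀.descSet_eq_component hav h0 hpar₀
    rw [hDa] at e1
    exact hvs (e1.trans e2.symm)
  -- v is a T₀-ancestor of a
  have hin : T₀.anc v a := by
    by_contra hvn
    obtain ⟨r₀, hr₀⟩ := T₀.root
    have hr₀v : r₀ ≠ v := by rintro rfl; exact hvn (hr₀ a)
    obtain ⟨p, hpv, hpanc, hppar⟩ := T₀.exists_parent (hr₀ v) hr₀v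
    have hDp : T.descSet p = T₀.descSet p := nondisc p hpanc hpv
    have hap : a ≠ p := by rintro rfl; exact hnot hpanc
    have hTpv : T.anc p v := by
      have : v ∈ T₀.descSet p := hpanc
      rw [← hDp] at this; exact this
    have hTpa : T.anc p a := by
      rcases hpar p hTpv with h | h
      · exact absurd h hpv
      · exact h
    have hsub : T.descSet a ⊆ T.descSet p \ {p} := by
      intro x hx
      refine ⟨T.descSet_subset hTpa hx, ?_⟩
      intro hxp
      rw [Set.mem_singleton_iff] at hxp
      exact hap (T.antisymm _ _ (hxp ▸ hx : T.anc a p) hTpa)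
    have hwr : WReach G (T.descSet p \ {p}) v a :=
      ((T.wreach_descSet (T.refl a) hanc).mono hsub).symm
    have e2 := T₀.descSet_eq_component hpv hpanc hppar
    have : a ∈ T₀.descSet v := by rw [e2]; exact hDp ▸ hwr
    exact hvn this
  -- the rotated tree
  refine ⟨rotate T a v hav hanc hpar, ⟨a, v, isRotation_rotate T hav hanc hpar⟩, ?_⟩
  have hle : ∀ w, ({u | (rotate T a v hav hanc hpar).anc u w ∧ T₀.anc w u}).ncard ≤
      ({u | T.anc u w ∧ T₀.anc w u}).ncard := by
    intro w
    apply Set.ncard_le_ncard _ (Set.toFinite _)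
    rintro u ⟨h1, h2⟩
    have h1' : w ∈ rotDesc T a v u := h1
    by_cases huv : u = v
    · rw [rotDesc_eq_v T huv] at h1'
      have h2' : T₀.anc w v := huv ▸ h2
      by_cases hwv : w = v
      · have hTuw : T.anc u w := by rw [huv, hwv]; exact T.refl v
        exact ⟨hTuw, h2⟩
      · exfalso
        have hDw : T.descSet w = T₀.descSet w := nondisc w h2' hwv
        have hTwv : T.anc w v := by
          have : v ∈ T₀.descSet w := h2'
          rw [← hDw] at this; exact this
        rcases hpar w hTwv with h | h
        · exact hwv h
        · exact hnot ((T.antisymm _ _ h1' h : a = w).symm ▸ h2')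
    · by_cases hua : u = a
      · rw [rotDesc_eq_a T hav hua] at h1'
        have : T.anc a w := (rotB_subset_sdiff T h1').1
        exact ⟨hua.symm ▸ this, h2⟩
      · rw [rotDesc_eq_other T huv hua] at h1'
        exact ⟨h1', h2⟩
  have hveq : {u | (rotate T a v hav hanc hpar).anc u v ∧ T₀.anc v u} =
      {u | T.anc u v ∧ T₀.anc v u} \ {a} := by
    ext u
    simp only [Set.mem_setOf_eq, Set.mem_diff, Set.mem_singleton_iff]
    constructor
    · rintro ⟨h1, h2⟩
      have h1' : v ∈ rotDesc T a v u := h1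
      by_cases huv : u = v
      · refine ⟨⟨by rw [huv]; exact T.refl v, h2⟩, fun h => hav (h.symm.trans huv)⟩
      · by_cases hua : u = a
        · exfalso
          rw [rotDesc_eq_a T hav hua] at h1'
          exact (rotB_subset_sdiff T h1').2 rfl
        · rw [rotDesc_eq_other T huv hua] at h1'
          exact ⟨⟨h1', h2⟩, hua⟩
    · rintro ⟨⟨h1, h2⟩, hua⟩
      refine ⟨?_, h2⟩
      show v ∈ rotDesc T a v u
      by_cases huv : u = v
      · rw [rotDesc_eq_v T huv]; exact hanc
      · rw [rotDesc_eq_other T huv hua]; exact h1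
  have hlt : ({u | (rotate T a v hav hanc hpar).anc u v ∧ T₀.anc v u}).ncard <
      ({u | T.anc u v ∧ T₀.anc v u}).ncard := by
    rw [hveq]
    have hmem : a ∈ {u | T.anc u v ∧ T₀.anc v u} := ⟨hanc, hin⟩
    exact Set.ncard_lt_ncard (Set.sdiff_singleton_ssubset.2 hmem) (Set.toFinite _)
  exact Finset.sum_lt_sum (fun w _ => hle w) ⟨v, Finset.mem_univ v, hlt⟩

end SearchTree

namespace SearchTree

variable {V : Type} {G : SimpleGraph V}

lemma edist_le_pot [Fintype V] (T₀ : SearchTree G) :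
    ∀ (k : ℕ) (T : SearchTree G), pot T₀ T ≤ k →
      (rotationGraph G).edist T T₀ ≤ (pot T₀ T : ℕ∞) := by
  intro k
  induction k with
  | zero =>
      intro T hT
      by_cases hd : ∀ w, T.descSet w = T₀.descSet w
      · rw [eq_of_descSet T T₀ hd, edist_self]
        exact zero_le
      · push_neg at hd
        obtain ⟨T', _, hlt⟩ := exists_adj_pot_lt T₀ T hd
        omega
  | succ k ih =>
      intro T hT
      by_cases hd : ∀ w, T.descSet w = T₀.descSet w
      · rw [eq_of_descSet T T₀ hd, SimpleGraph.edist_self]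
        exact zero_le
      · push_neg at hd
        obtain ⟨T', hadj, hlt⟩ := exists_adj_pot_lt T₀ T hd
        have h1 : (rotationGraph G).edist T T' ≤ 1 := by
          have := SimpleGraph.edist_le hadj.toWalk
          simpa using this
        have h2 := ih T' (by omega)
        calc (rotationGraph G).edist T T₀
            ≤ (rotationGraph G).edist T T' + (rotationGraph G).edist T' T₀ :=
              SimpleGraph.edist_triangle
          _ ≤ 1 + (pot T₀ T' : ℕ∞) := add_le_add h1 h2
          _ ≤ (pot T₀ T : ℕ∞) := by
              rw [← Nat.cast_one, ← Nat.cast_add, Nat.cast_le]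
              omega

lemma pot_le [Fintype V] (T₀ T : SearchTree G) {td : ℕ} (hh : T₀.height ≤ td) :
    pot T₀ T ≤ Fintype.card V * td := by
  classical
  have step1 : pot T₀ T ≤ ∑ w : V, ({u | T₀.anc w u}).ncard := by
    apply Finset.sum_le_sum
    intro w _
    exact Set.ncard_le_ncard (fun u hu => hu.2) (Set.toFinite _)
  have hcard : ∀ w : V, ({u | T₀.anc w u}).ncard =
      (Finset.univ.filter (fun u => T₀.anc w u)).card := by
    intro w
    rw [← Set.ncard_coe_finset]
    congr 1
    ext u
    simp
  have hcard2 : ∀ u : V, ({w | T₀.anc w u}).ncard =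
      (Finset.univ.filter (fun w => T₀.anc w u)).card := by
    intro u
    rw [← Set.ncard_coe_finset]
    congr 1
    ext w
    simp
  have step2 : ∑ w : V, ({u | T₀.anc w u}).ncard = ∑ u : V, ({w | T₀.anc w u}).ncard := by
    simp only [hcard, hcard2, Finset.card_filter]
    exact Finset.sum_comm
  have step3 : ∀ u : V, ({w | T₀.anc w u}).ncard ≤ td := by
    intro u
    calc ({w | T₀.anc w u}).ncard ≤ T₀.height :=
        Finset.le_sup (f := fun v => Set.ncard {w | T₀.anc w v}) (Finset.mem_univ u)
      _ ≤ td := hh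
  calc pot T₀ T ≤ ∑ u : V, ({w | T₀.anc w u}).ncard := step2 ▸ step1
    _ ≤ ∑ _u : V, td := Finset.sum_le_sum (fun u _ => step3 u)
    _ = Fintype.card V * td := by simp [Finset.sum_const, Finset.card_univ, mul_comm]

end SearchTree
/-- Let `G` be a connected graph on `n` vertices with tree-depth
at most `td`. Then `δ(A(G)) ≤ 2 * td * n`. -/
theorem diam_assoc_le_treedepth {V : Type} [Fintype V] (G : SimpleGraph V)
    (hconn : G.Connected) (n td : ℕ) (hn : Nat.card V = n) (htd : treeDepth G ≤ td) :
    (rotationGraph G).ediam ≤ ((2 * td * n : ℕ) : ℕ∞) := by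
  classical
  apply SimpleGraph.ediam_le_of_edist_le
  intro T T'
  have hset : {h | ∃ T₀ : SearchTree G, T₀.height = h}.Nonempty := ⟨T.height, T, rfl⟩
  obtain ⟨T₀, hT₀⟩ := Nat.sInf_mem hset
  have hh : T₀.height ≤ td := by rw [hT₀]; exact htd
  have hb : Fintype.card V = n := by rw [← Nat.card_eq_fintype_card, hn]
  have h1 := SearchTree.edist_le_pot T₀ (SearchTree.pot T₀ T) T le_rfl
  have h2 := SearchTree.edist_le_pot T₀ (SearchTree.pot T₀ T') T' le_rfl
  have hp1 := SearchTree.pot_le T₀ T hh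
  have hp2 := SearchTree.pot_le T₀ T' hh
  rw [hb] at hp1 hp2
  calc (rotationGraph G).edist T T'
      ≤ (rotationGraph G).edist T T₀ + (rotationGraph G).edist T₀ T' :=
        SimpleGraph.edist_triangle
    _ ≤ (SearchTree.pot T₀ T : ℕ∞) + (SearchTree.pot T₀ T' : ℕ∞) :=
        add_le_add h1 (by rw [SimpleGraph.edist_comm]; exact h2)
    _ ≤ ((2 * td * n : ℕ) : ℕ∞) := by
        rw [← Nat.cast_add, Nat.cast_le]
        have : n * td + n * td = 2 * td * n := by ring
        omega
end

section
/- Let p and q be positive integers and let α, β be integers with 0 ≤ α < p and 0 ≤ β < q. Define f(k) = p(p−1)/2 + q(q−1)/2 − k(k−1)/2 + αq + k(2p − 2α − 1) + |β − k|. Then for every integer k with 0 ≤ k ≤ q, one has f(k) ≥ min{f(0), f(q)}. -/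
open SimpleGraph

/-- The function `f` of Proposition 1:
`f k = C(p,2) + C(q,2) - C(k,2) + α q + k (2p - 2α - 1) + |β - k|`. -/
def fSPK (p q α β k : ℤ) : ℤ :=
  p * (p - 1) / 2 + q * (q - 1) / 2 - k * (k - 1) / 2 + α * q +
    k * (2 * p - 2 * α - 1) + |β - k|

/-- Let `p, q` be positive integers and `0 ≤ α < p`, `0 ≤ β < q`.
Then for every integer `k` with `0 ≤ k ≤ q`, `f k ≥ min (f 0) (f q)`. -/
theorem fSPK_ge_min (p q α β : ℤ) (hp : 0 < p) (hq : 0 < q)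
    (hα0 : 0 ≤ α) (hαp : α < p) (hβ0 : 0 ≤ β) (hβq : β < q) :
    ∀ k : ℤ, 0 ≤ k → k ≤ q →
      min (fSPK p q α β 0) (fSPK p q α β q) ≤ fSPK p q α β k := by
  have hdvd : ∀ m : ℤ, 2 * (m * (m - 1) / 2) = m * (m - 1) := by
    intro m
    have he : Even (m * (m - 1)) := by
      have := Int.even_mul_succ_self (m - 1)
      simpa [mul_comm] using this
    exact Int.two_mul_ediv_two_of_even he
  intro k hk0 hkq
  have hb : 2 * (q * (q - 1) / 2) = q * (q - 1) := hdvd q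
  have hc : 2 * (k * (k - 1) / 2) = k * (k - 1) := hdvd k
  have habs0 : |β - (0 : ℤ)| = β := by rw [sub_zero, abs_of_nonneg hβ0]
  have habsq : |β - q| = q - β := by rw [abs_of_nonpos (by linarith)]; ring
  rcases le_or_gt k β with hkβ | hkβ
  · have habsk : |β - k| = β - k := abs_of_nonneg (by linarith)
    rcases le_or_gt k (4 * (p - α) - 3) with h | h
    · refine le_trans (min_le_left _ _) ?_
      simp only [fSPK, habs0, habsk]; norm_num
      nlinarith [mul_nonneg hk0 (show (0:ℤ) ≤ 4 * (p - α) - 3 - k by linarith)]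
    · refine le_trans (min_le_right _ _) ?_
      simp only [fSPK, habsq, habsk]
      nlinarith [mul_nonneg (show (0:ℤ) ≤ q - k by linarith)
        (show (0:ℤ) ≤ q + k - 1 - 4 * (p - α) by linarith)]
  · have habsk : |β - k| = k - β := by rw [abs_of_nonpos (by linarith)]; ring
    rcases le_or_gt (4 * (p - α)) (q + k - 1) with h | h
    · refine le_trans (min_le_right _ _) ?_
      simp only [fSPK, habsq, habsk]
      nlinarith [mul_nonneg (show (0:ℤ) ≤ q - k by linarith)
        (show (0:ℤ) ≤ q + k - 1 - 4 * (p - α) by linarith)]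
    · refine le_trans (min_le_left _ _) ?_
      simp only [fSPK, habs0, habsk]; norm_num
      nlinarith [mul_nonneg hk0 (show (0:ℤ) ≤ 4 * (p - α) - q - k by linarith),
        mul_nonneg (show (0:ℤ) ≤ k - β - 1 by linarith) (show (0:ℤ) ≤ q - 1 by linarith),
        mul_nonneg hβ0 (show (0:ℤ) ≤ q - 1 - β by linarith),
        mul_nonneg (show (0:ℤ) ≤ q - 1 - β by linarith) (show (0:ℤ) ≤ q - 1 by linarith),
        mul_nonneg hβ0 hβ0, mul_nonneg hk0 hk0]
end

section
/- Let p, q be positive integers. If q ≥ 4p + 1, then δ(A(SPK_{p,q})) ≥ 2pq + p(p−1)/2; otherwise (i.e., if q ≤ 4p), δ(A(SPK_{p,q})) ≥ pq + ⌊q(q−1)/4⌋ + p(p−1)/2. -/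
open SimpleGraph

-- Part 1: basic rotation lemmas
section Rot
variable {V : Type} {G : SimpleGraph V}

/-- Key rigidity lemma: if a rotation step turns `u` above `v` into `v` above `u`,
then the rotation pair is exactly `(u, v)`. -/
lemma IsRotation.eq_pair {T T' : SearchTree G} {a b u v : V}
    (hrot : IsRotation T T' a b) (huv : u ≠ v)
    (h1 : T.anc u v) (h2 : T'.anc v u) : a = u ∧ b = v := by
  obtain ⟨hab, hanc, hb, hoth⟩ := hrot
  by_cases hv : v = b
  · by_cases hu : u = a
    · exact ⟨hu.symm, hv.symm⟩
    · exfalso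
      by_cases hub : u = b
      · exact huv (hub.trans hv.symm)
      · have hds : T'.descSet u = T.descSet u := hoth u hu hub
        have h1' : T'.anc u v := show v ∈ T'.descSet u from hds ▸ h1
        exact huv (T'.antisymm u v h1' h2)
  · exfalso
    by_cases hva : v = a
    · by_cases hub : u = b
      · have h1' : T.anc b a := by rw [← hub, ← hva] at hanc ⊢; exact h1
        exact hab (T.antisymm a b hanc h1')
      · have hds : T'.descSet u = T.descSet u :=
          hoth u (fun h => huv (h.trans hva.symm)) hub
        have h1' : T'.anc u v := show v ∈ T'.descSet u from hds ▸ h1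
        exact huv (T'.antisymm u v h1' h2)
    · have hds : T'.descSet v = T.descSet v := hoth v hva hv
      have h2' : T.anc v u := show u ∈ T.descSet v from hds ▸ h2
      exact huv (T.antisymm u v h1 h2')

end Rot
-- Part 2: SPK-specific lemmas and walk machinery
section SPKlem
variable {p q : ℕ}

abbrev SPKV (p q : ℕ) := Fin p ⊕ Fin q

lemma spk_adj_inl_left (j : Fin p) (v : SPKV p q) (h : Sum.inl j ≠ v) :
    (SPK p q).Adj (Sum.inl j) v := ⟨h, Or.inl rfl⟩

lemma spk_adj_PP {j j' : Fin p} (h : j ≠ j') :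
    (SPK p q).Adj (Sum.inl j) (Sum.inl j' : SPKV p q) :=
  spk_adj_inl_left j _ (by simpa using h)

lemma spk_adj_PQ (j : Fin p) (i : Fin q) :
    (SPK p q).Adj (Sum.inl j) (Sum.inr i : SPKV p q) :=
  spk_adj_inl_left j _ (by simp)

/-- If two Q-vertices are incomparable in a search tree on `SPK p q`, then every
P-vertex is an ancestor of both. -/
lemma below_all_P {T : SearchTree (SPK p q)} {x y : Fin q} (hxy : x ≠ y)
    (h1 : ¬ T.anc (Sum.inr x) (Sum.inr y)) (h2 : ¬ T.anc (Sum.inr y) (Sum.inr x))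
    (a : Fin p) : T.anc (Sum.inl a) (Sum.inr x) := by
  rcases T.edge_comparable _ _ (spk_adj_PQ a x) with h | h
  · exact h
  · exfalso
    rcases T.edge_comparable _ _ (spk_adj_PQ a y) with h' | h'
    · exact h1 (T.trans _ _ _ h h')
    · rcases T.chain _ _ _ h h' with hc | hc
      · exact h1 hc
      · exact h2 hc
end SPKlem

-- Walk machinery
section WalkM
variable {V : Type} {G : SimpleGraph V}

/-- A chosen ordered rotation pair for an adjacency in the rotation graph. -/
noncomputable def rotPair {T T' : SearchTree G} (h : (rotationGraph G).Adj T T') : V × V :=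
  (h.choose, h.choose_spec.choose)

lemma rotPair_spec {T T' : SearchTree G} (h : (rotationGraph G).Adj T T') :
    IsRotation T T' (rotPair h).1 (rotPair h).2 := h.choose_spec.choose_spec

/-- The list of ordered rotation pairs along a walk in the rotation graph. -/
noncomputable def pairsList {T T' : SearchTree G} :
    (rotationGraph G).Walk T T' → List (V × V)
  | SimpleGraph.Walk.nil => []
  | SimpleGraph.Walk.cons h w => rotPair h :: pairsList w

lemma pairsList_length {T T' : SearchTree G} (w : (rotationGraph G).Walk T T') :
    (pairsList w).length = w.length := by
  induction w with
  | nil => rfl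
  | cons h w ih => simp [pairsList, ih]

/-- Walk lemma for G-adjacent pairs: if the orientation of an edge differs at the two
ends of a walk, then the ordered pair occurs as a rotation pair along the walk. -/
lemma mem_pairsList_of_flip {T T' : SearchTree G} (w : (rotationGraph G).Walk T T')
    {u v : V} (huv : u ≠ v) (hadj : G.Adj u v)
    (h1 : T.anc u v) (h2 : T'.anc v u) : (u, v) ∈ pairsList w := by
  revert h1; induction w with
  | nil => exact fun h1 => absurd (‹SearchTree G›.antisymm u v h1 h2) huv
  | @cons T T'' T''' h w ih =>
    intro h1
    by_cases hp : rotPair h = (u, v)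
    · simp [pairsList, hp]
    · have hrot := rotPair_spec h
      have hkeep : T''.anc u v := by
        rcases T''.edge_comparable u v hadj with h' | h'
        · exact h'
        · exfalso
          obtain ⟨ha, hb⟩ := hrot.eq_pair huv h1 h'
          exact hp (by rw [← ha, ← hb])
      simp [pairsList]
      exact Or.inr (ih h2 hkeep)

/-- Walk lemma for arbitrary pairs: either the ordered pair occurs as a rotation pair,
or the two vertices are incomparable somewhere along the walk. -/
lemma mem_pairsList_or_incomp {T T' : SearchTree G} (w : (rotationGraph G).Walk T T')
    {u v : V} (huv : u ≠ v)
    (h1 : T.anc u v) (h2 : T'.anc v u) :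
    (u, v) ∈ pairsList w ∨
      ∃ S ∈ w.support, ¬ S.anc u v ∧ ¬ S.anc v u := by
  revert h1; induction w with
  | nil => exact fun h1 => absurd (‹SearchTree G›.antisymm u v h1 h2) huv
  | @cons T T'' T''' h w ih =>
    intro h1
    by_cases hp : rotPair h = (u, v)
    · left; simp [pairsList, hp]
    · have hrot := rotPair_spec h
      by_cases hc : T''.anc u v
      · rcases ih h2 hc with hm | ⟨S, hS, hSi⟩
        · left; simp [pairsList]; exact Or.inr hm
        · right; exact ⟨S, by simp [SimpleGraph.Walk.support_cons]; exact Or.inr hS, hSi⟩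
      · by_cases hc' : T''.anc v u
        · exfalso
          obtain ⟨ha, hb⟩ := hrot.eq_pair huv h1 hc'
          exact hp (by rw [← ha, ← hb])
        · right
          exact ⟨T'', by simp [SimpleGraph.Walk.support_cons], hc, hc'⟩

end WalkM
-- Part 3: linear-order search trees on SPK
section LinTree
variable {p q : ℕ}

/-- Connectivity of an induced subgraph of `SPK p q` containing a P-vertex. -/
lemma spk_induce_connected_of_P {U : Set (SPKV p q)} {a : Fin p} (ha : Sum.inl a ∈ U) :
    ((SPK p q).induce U).Connected := by
  rw [SimpleGraph.connected_iff]
  refine ⟨?_, ⟨⟨_, ha⟩⟩⟩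
  intro u w
  have key : ∀ z : U, z ≠ ⟨Sum.inl a, ha⟩ → ((SPK p q).induce U).Adj z ⟨Sum.inl a, ha⟩ := by
    intro z hz
    refine SimpleGraph.Adj.symm ?_
    show (SPK p q).Adj (Sum.inl a) z.1
    apply spk_adj_inl_left
    intro h
    exact hz (Subtype.ext h.symm)
  by_cases hu : u = ⟨Sum.inl a, ha⟩
  · by_cases hw : w = ⟨Sum.inl a, ha⟩
    · rw [hu, hw]
    · rw [hu]; exact ((key w hw).reachable).symm
  · by_cases hw : w = ⟨Sum.inl a, ha⟩
    · rw [hw]; exact (key u hu).reachable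
    · exact ((key u hu).reachable).trans ((key w hw).reachable).symm

lemma spk_induce_connected_singleton (v : SPKV p q) :
    ((SPK p q).induce {u | u = v}).Connected := by
  rw [SimpleGraph.connected_iff]
  refine ⟨?_, ⟨⟨v, rfl⟩⟩⟩
  rintro ⟨u, hu⟩ ⟨w, hw⟩
  simp only [Set.mem_setOf_eq] at hu hw
  subst hu; subst hw
  rfl

/-- Build a search tree on `SPK p q` from an injective rank function whose
up-sets either contain a P-vertex or are singletons. -/
noncomputable def linTree (hp : 0 < p) (ρ : SPKV p q → ℕ)
    (hinj : Function.Injective ρ)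
    (hconn : ∀ v : SPKV p q, (∃ a : Fin p, ρ v ≤ ρ (Sum.inl a)) ∨
      (∀ u, ρ v ≤ ρ u → u = v)) :
    SearchTree (SPK p q) where
  anc u v := ρ u ≤ ρ v
  refl v := le_refl _
  antisymm u v h1 h2 := hinj (le_antisymm h1 h2)
  trans u v w h1 h2 := le_trans h1 h2
  chain u v w _ _ := le_total (ρ u) (ρ v)
  root := by
    obtain ⟨r, -, hr⟩ := Finset.exists_min_image (Finset.univ : Finset (SPKV p q)) ρ
      ⟨Sum.inl ⟨0, hp⟩, Finset.mem_univ _⟩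
    exact ⟨r, fun v => hr v (Finset.mem_univ v)⟩
  edge_comparable u v _ := le_total (ρ u) (ρ v)
  desc_connected := by
    intro v
    rcases hconn v with ⟨a, ha⟩ | hsing
    · exact spk_induce_connected_of_P (U := {u | ρ v ≤ ρ u}) (a := a) ha
    · have : {u | ρ v ≤ ρ u} = {u | u = v} := by
        ext u
        constructor
        · exact fun h => hsing u h
        · rintro rfl; exact Nat.le_refl _
      rw [this]
      exact spk_induce_connected_singleton v

@[simp] lemma linTree_anc (hp : 0 < p) (ρ : SPKV p q → ℕ) (hinj) (hconn) (u v : SPKV p q) :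
    (linTree hp ρ hinj hconn).anc u v ↔ ρ u ≤ ρ v := Iff.rfl

end LinTree
-- Part 4: the extremal trees T0, T1
section Trees
variable {p q e r : ℕ}

def rho0 (p q : ℕ) : SPKV p q → ℕ := fun v =>
  match v with
  | .inl j => q + j.val
  | .inr i => i.val

def rho1 (p q e r : ℕ) : SPKV p q → ℕ := fun v =>
  match v with
  | .inl j => if e ≤ j.val then p - 1 - j.val
              else if j.val + 1 = e then ((p - e) + q) - r
              else (p + q - 1) - j.val
  | .inr i => if r ≤ i.val then (p - e) + ((q - 1) - i.val)
              else (p - e) + (q - i.val)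

/-- The T1-depth class of a Q-vertex. -/
def eQ (e r : ℕ) (i : Fin q) : ℕ := if i.val < r then e - 1 else e

lemma rho0_inj : Function.Injective (rho0 p q) := by
  rintro (j | i) (j' | i') h <;> simp only [rho0] at h
  · have := j.isLt; have := j'.isLt
    exact congrArg Sum.inl (Fin.ext (by omega))
  · have := j.isLt; have := i'.isLt; omega
  · have := i.isLt; have := j'.isLt; omega
  · exact congrArg Sum.inr (Fin.ext (by omega))

section withHyp
variable (he : e ≤ p) (hrq : r < q)
include he hrq

lemma rho1_inj : Function.Injective (rho1 p q e r) := by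
  rintro (j | i) (j' | i') h <;> simp only [rho1] at h
  · have := j.isLt; have := j'.isLt
    refine congrArg Sum.inl (Fin.ext ?_)
    split_ifs at h <;> omega
  · have := j.isLt; have := i'.isLt
    exfalso; split_ifs at h <;> omega
  · have := i.isLt; have := j'.isLt
    exfalso; split_ifs at h <;> omega
  · have := i.isLt; have := i'.isLt
    refine congrArg Sum.inr (Fin.ext ?_)
    split_ifs at h <;> omega

lemma rho1_PP {j j' : Fin p} (hjj : j.val < j'.val) :
    rho1 p q e r (.inl j') ≤ rho1 p q e r (.inl j) := by
  have := j.isLt; have := j'.isLt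
  simp only [rho1]; split_ifs <;> omega

lemma rho1_QQ {i i' : Fin q} (hii : i.val < i'.val) :
    rho1 p q e r (.inr i') ≤ rho1 p q e r (.inr i) := by
  have := i.isLt; have := i'.isLt
  simp only [rho1]; split_ifs <;> omega

lemma rho1_mixed_above {j : Fin p} {i : Fin q} (h : eQ e r i ≤ j.val) :
    rho1 p q e r (.inl j) ≤ rho1 p q e r (.inr i) := by
  have := j.isLt; have := i.isLt
  simp only [rho1, eQ] at *; split_ifs at * <;> omega

lemma rho1_mixed_below {j : Fin p} {i : Fin q} (h : j.val < eQ e r i) :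
    rho1 p q e r (.inr i) ≤ rho1 p q e r (.inl j) := by
  have := j.isLt; have := i.isLt
  simp only [rho1, eQ] at *; split_ifs at * <;> omega

end withHyp
end Trees
-- Part 5: cardinality helpers
section Cards
open Finset

lemma two_mul_card_lt_pairs {n : ℕ} (s : Finset (Fin n)) :
    2 * ((s ×ˢ s).filter fun z => z.1.val < z.2.val).card = s.card * (s.card - 1) := by
  classical
  have hswap : ((s ×ˢ s).filter fun z => z.1.val < z.2.val).card
      = (((s ×ˢ s).filter fun z => ¬ z.1.val < z.2.val).filter fun z => z.2.val < z.1.val).card := by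
    apply Finset.card_bij (fun z _ => (z.2, z.1))
    · rintro ⟨a, b⟩ hz
      simp only [Finset.mem_filter, Finset.mem_product] at hz ⊢
      exact ⟨⟨⟨hz.1.2, hz.1.1⟩, by omega⟩, hz.2⟩
    · rintro ⟨a, b⟩ _ ⟨c, d⟩ _ h
      simp only [Prod.mk.injEq] at h
      exact Prod.ext h.2 h.1
    · rintro ⟨a, b⟩ hz
      refine ⟨(b, a), ?_, rfl⟩
      simp only [Finset.mem_filter, Finset.mem_product] at hz ⊢
      exact ⟨⟨hz.1.1.2, hz.1.1.1⟩, hz.2⟩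
  have hdiag : (((s ×ˢ s).filter fun z => ¬ z.1.val < z.2.val).filter
      fun z => ¬ z.2.val < z.1.val).card = s.card := by
    apply Finset.card_bij (fun z _ => z.1)
    · rintro ⟨a, b⟩ hz
      simp only [Finset.mem_filter, Finset.mem_product] at hz
      exact hz.1.1.1
    · rintro ⟨a, b⟩ hab ⟨c, d⟩ hcd h
      simp only [Finset.mem_filter, Finset.mem_product] at hab hcd
      have h1 : (a : ℕ) = b := by omega
      have h2 : (c : ℕ) = d := by omega
      have h3 : (a : ℕ) = c := congrArg Fin.val h
      exact Prod.ext h (Fin.ext (show (b:ℕ) = (d:ℕ) by omega))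
    · intro a ha
      refine ⟨(a, a), ?_, rfl⟩
      simp [Finset.mem_filter, Finset.mem_product, ha]
  have h1 := Finset.card_filter_add_card_filter_not
    (s := s ×ˢ s) (p := fun z => z.1.val < z.2.val)
  have h2 := Finset.card_filter_add_card_filter_not
    (s := (s ×ˢ s).filter fun z => ¬ z.1.val < z.2.val)
    (p := fun z => z.2.val < z.1.val)
  have h3 : (s ×ˢ s).card = s.card * s.card := by
    rw [Finset.card_product]
  have h5 : s.card * (s.card - 1) + s.card = s.card * s.card := by
    rcases hsc : s.card with _ | m
    · simp
    · simp [Nat.succ_sub_one]; ring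
  omega

lemma card_filter_val_lt {n c : ℕ} (hc : c ≤ n) :
    ((Finset.univ : Finset (Fin n)).filter fun j => j.val < c).card = c := by
  classical
  have : ((Finset.univ : Finset (Fin n)).filter fun j => j.val < c)
      = (Finset.Iio c).attachFin (fun m hm => lt_of_lt_of_le (Finset.mem_Iio.mp hm) hc) := by
    ext j
    simp [Finset.mem_attachFin]
  rw [this, Finset.card_attachFin]
  simp

lemma card_filter_val_ge {n c : ℕ} (hc : c ≤ n) :
    ((Finset.univ : Finset (Fin n)).filter fun j => c ≤ j.val).card = n - c := by
  classical
  have h := Finset.card_filter_add_card_filter_not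
    (s := (Finset.univ : Finset (Fin n))) (p := fun j => j.val < c)
  have h2 := card_filter_val_lt (n := n) hc
  have h3 : ((Finset.univ : Finset (Fin n)).filter fun j => ¬ j.val < c)
      = ((Finset.univ : Finset (Fin n)).filter fun j => c ≤ j.val) := by
    ext j; simp [Nat.not_lt]
  rw [h3] at h
  have h4 : (Finset.univ : Finset (Fin n)).card = n := by simp
  omega

end Cards
-- Part 6: the trees
section TheTrees
variable {p q e r : ℕ}

noncomputable def treeT0 (hp : 0 < p) : SearchTree (SPK p q) :=
  linTree hp (rho0 p q) rho0_inj (by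
    rintro (j | i)
    · exact Or.inl ⟨j, Nat.le_refl _⟩
    · refine Or.inl ⟨⟨0, hp⟩, ?_⟩
      show i.val ≤ q + 0
      omega)

lemma rho1_hconn (hp : 0 < p) (he : e ≤ p) (hrq : r < q)
    (her : r ≠ 0 → 1 ≤ e) (he1 : e = 1 → r ≤ 1) (he0 : e = 0 → r = 0 ∧ q = 1) :
    ∀ v : SPKV p q, (∃ a : Fin p, rho1 p q e r v ≤ rho1 p q e r (Sum.inl a)) ∨
      (∀ u, rho1 p q e r v ≤ rho1 p q e r u → u = v) := by
  rintro (j | i)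
  · exact Or.inl ⟨j, Nat.le_refl _⟩
  · have hiq := i.isLt
    by_cases hir : i.val < r
    · have he' : 1 ≤ e := her (by omega)
      by_cases he2 : 2 ≤ e
      · refine Or.inl ⟨⟨e - 2, by omega⟩, ?_⟩
        simp only [rho1]
        split_ifs <;> omega
      · -- e = 1, so r ≤ 1, i = 0
        have he'' : e = 1 := by omega
        have hr1 : r ≤ 1 := he1 he''
        right
        rintro (j' | i') h
        · exfalso
          have := j'.isLt
          simp only [rho1] at h
          split_ifs at h <;> omega
        · have := i'.isLt
          simp only [rho1] at h
          split_ifs at h <;>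
            exact congrArg Sum.inr (Fin.ext (by omega))
    · by_cases he0' : e = 0
      · obtain ⟨hr0, hq1⟩ := he0 he0'
        right
        rintro (j' | i') h
        · exfalso
          have := j'.isLt
          simp only [rho1] at h
          split_ifs at h <;> omega
        · have := i'.isLt
          simp only [rho1] at h
          split_ifs at h <;>
            exact congrArg Sum.inr (Fin.ext (by omega))
      · refine Or.inl ⟨⟨e - 1, by omega⟩, ?_⟩
        simp only [rho1]
        split_ifs <;> omega

noncomputable def treeT1 (hp : 0 < p) (he : e ≤ p) (hrq : r < q)
    (her : r ≠ 0 → 1 ≤ e) (he1 : e = 1 → r ≤ 1) (he0 : e = 0 → r = 0 ∧ q = 1) :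
    SearchTree (SPK p q) :=
  linTree hp (rho1 p q e r) (rho1_inj he hrq) (rho1_hconn hp he hrq her he1 he0)

end TheTrees
-- Part 7: main counting bound
section MainCount
open Finset

lemma pairsList_append {V : Type} {G : SimpleGraph V} {T T' T'' : SearchTree G}
    (w1 : (rotationGraph G).Walk T T') (w2 : (rotationGraph G).Walk T' T'') :
    pairsList (w1.append w2) = pairsList w1 ++ pairsList w2 := by
  induction w1 with
  | nil => rfl
  | cons h w ih => simp [SimpleGraph.Walk.cons_append, pairsList, ih]

variable {p q e r : ℕ}

theorem walk_bound (hp : 0 < p) (hq : 0 < q) (he : e ≤ p) (hrq : r < q)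
    (her : r ≠ 0 → 1 ≤ e) (he1 : e = 1 → r ≤ 1) (he0 : e = 0 → r = 0 ∧ q = 1)
    (N : ℕ)
    (hN : ∀ k cB SB P2 Q2 W2, k ≤ q → cB ≤ k → cB ≤ r → SB + cB = e * k →
        2*P2 = p*(p-1) → 2*Q2 = q*(q-1) → 2*W2 = k*(k-1) → W2 ≤ Q2 →
        N ≤ P2 + (q*(p-e) + r) + (SB + SB) + (Q2 - W2))
    (w : (rotationGraph (SPK p q)).Walk (treeT0 hp) (treeT1 hp he hrq her he1 he0)) :
    N ≤ w.length := by
  classical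
  set L := pairsList w with hL
  -- the set of Q-vertices that are below all of P at some point of the walk
  set B : Finset (Fin q) :=
    Finset.univ.filter
      (fun i => ∃ S ∈ w.support, ∀ a : Fin p, S.anc (Sum.inl a) (Sum.inr i)) with hB
  -- membership lemmas
  have mem1 : ∀ j j' : Fin p, j.val < j'.val →
      ((Sum.inl j : SPKV p q), (Sum.inl j' : SPKV p q)) ∈ L := by
    intro j j' hjj
    apply mem_pairsList_of_flip w
    · simp only [ne_eq, Sum.inl.injEq]
      intro h; exact absurd (congrArg Fin.val h) (by omega)
    · exact spk_adj_PP (fun h => absurd (congrArg Fin.val h) (by omega))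
    · show rho0 p q _ ≤ rho0 p q _
      simp only [rho0]; omega
    · exact rho1_PP he hrq hjj
  have mem2 : ∀ (i : Fin q) (j : Fin p), eQ e r i ≤ j.val →
      ((Sum.inr i : SPKV p q), (Sum.inl j : SPKV p q)) ∈ L := by
    intro i j hij
    apply mem_pairsList_of_flip w
    · simp
    · exact (spk_adj_PQ j i).symm
    · show rho0 p q _ ≤ rho0 p q _
      simp only [rho0]; have := i.isLt; omega
    · exact rho1_mixed_above he hrq hij
  have mem3a : ∀ (i : Fin q) (j : Fin p), i ∈ B → j.val < eQ e r i →
      ((Sum.inr i : SPKV p q), (Sum.inl j : SPKV p q)) ∈ L := by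
    intro i j hiB hij
    obtain ⟨S, hS, hall⟩ := (Finset.mem_filter.mp hiB).2
    have hsplit := w.take_spec hS
    have hmem : ((Sum.inr i : SPKV p q), (Sum.inl j : SPKV p q))
        ∈ pairsList (w.takeUntil S hS) := by
      apply mem_pairsList_of_flip
      · simp
      · exact (spk_adj_PQ j i).symm
      · show rho0 p q _ ≤ rho0 p q _
        simp only [rho0]; have := i.isLt; omega
      · exact hall j
    rw [hL, ← hsplit, pairsList_append]
    exact List.mem_append_left _ hmem
  have mem3b : ∀ (i : Fin q) (j : Fin p), i ∈ B → j.val < eQ e r i →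
      ((Sum.inl j : SPKV p q), (Sum.inr i : SPKV p q)) ∈ L := by
    intro i j hiB hij
    obtain ⟨S, hS, hall⟩ := (Finset.mem_filter.mp hiB).2
    have hsplit := w.take_spec hS
    have hmem : ((Sum.inl j : SPKV p q), (Sum.inr i : SPKV p q))
        ∈ pairsList (w.dropUntil S hS) := by
      apply mem_pairsList_of_flip
      · simp
      · exact spk_adj_PQ j i
      · exact hall j
      · exact rho1_mixed_below he hrq hij
    rw [hL, ← hsplit, pairsList_append]
    exact List.mem_append_right _ hmem
  have mem4 : ∀ i i' : Fin q, i.val < i'.val → ¬(i ∈ B ∧ i' ∈ B) →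
      ((Sum.inr i : SPKV p q), (Sum.inr i' : SPKV p q)) ∈ L := by
    intro i i' hii hnB
    have hne : (Sum.inr i : SPKV p q) ≠ Sum.inr i' := by
      simp only [ne_eq, Sum.inr.injEq]
      intro h; exact absurd (congrArg Fin.val h) (by omega)
    have h1 : (treeT0 (q := q) hp).anc (Sum.inr i) (Sum.inr i') := by
      show rho0 p q _ ≤ rho0 p q _
      simp only [rho0]; omega
    have h2 : (treeT1 hp he hrq her he1 he0).anc (Sum.inr i') (Sum.inr i) :=
      rho1_QQ he hrq hii
    rcases mem_pairsList_or_incomp w hne h1 h2 with hm | ⟨S, hS, hnc1, hnc2⟩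
    · exact hm
    · exfalso
      apply hnB
      have hfin : i ≠ i' := fun h => absurd (congrArg Fin.val h) (by omega)
      constructor
      · exact Finset.mem_filter.mpr ⟨Finset.mem_univ _,
          ⟨S, hS, fun a => below_all_P hfin hnc1 hnc2 a⟩⟩
      · exact Finset.mem_filter.mpr ⟨Finset.mem_univ _,
          ⟨S, hS, fun a => below_all_P hfin.symm hnc2 hnc1 a⟩⟩
  -- the five key finsets
  set K1 : Finset (SPKV p q × SPKV p q) :=
    ((Finset.univ ×ˢ Finset.univ : Finset (Fin p × Fin p)).filter
      fun z => z.1.val < z.2.val).image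
      (fun z => (Sum.inl z.1, Sum.inl z.2)) with hK1
  set K2 : Finset (SPKV p q × SPKV p q) :=
    ((Finset.univ ×ˢ Finset.univ : Finset (Fin q × Fin p)).filter
      fun z => eQ e r z.1 ≤ z.2.val).image
      (fun z => (Sum.inr z.1, Sum.inl z.2)) with hK2
  set A3 : Finset (Fin q × Fin p) :=
    (Finset.univ ×ˢ Finset.univ).filter
      (fun z => z.1 ∈ B ∧ z.2.val < eQ e r z.1) with hA3
  set K3a : Finset (SPKV p q × SPKV p q) :=
    A3.image (fun z => (Sum.inr z.1, Sum.inl z.2)) with hK3a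
  set K3b : Finset (SPKV p q × SPKV p q) :=
    A3.image (fun z => (Sum.inl z.2, Sum.inr z.1)) with hK3b
  set K4 : Finset (SPKV p q × SPKV p q) :=
    ((Finset.univ ×ˢ Finset.univ : Finset (Fin q × Fin q)).filter
      fun z => z.1.val < z.2.val ∧ ¬(z.1 ∈ B ∧ z.2 ∈ B)).image
      (fun z => (Sum.inr z.1, Sum.inr z.2)) with hK4
  -- the union is contained in the list of rotation pairs
  have hsub : K1 ∪ K2 ∪ K3a ∪ K3b ∪ K4 ⊆ L.toFinset := by
    intro z hz
    rw [List.mem_toFinset]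
    simp only [Finset.mem_union] at hz
    rcases hz with ((((hz | hz) | hz) | hz) | hz)
    · obtain ⟨y, hy, rfl⟩ := Finset.mem_image.mp hz
      simp only [Finset.mem_filter, Finset.mem_product] at hy
      exact mem1 y.1 y.2 hy.2
    · obtain ⟨y, hy, rfl⟩ := Finset.mem_image.mp hz
      simp only [Finset.mem_filter, Finset.mem_product] at hy
      exact mem2 y.1 y.2 hy.2
    · obtain ⟨y, hy, rfl⟩ := Finset.mem_image.mp hz
      rw [hA3] at hy
      simp only [Finset.mem_filter, Finset.mem_product] at hy
      exact mem3a y.1 y.2 hy.2.1 hy.2.2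
    · obtain ⟨y, hy, rfl⟩ := Finset.mem_image.mp hz
      rw [hA3] at hy
      simp only [Finset.mem_filter, Finset.mem_product] at hy
      exact mem3b y.1 y.2 hy.2.1 hy.2.2
    · obtain ⟨y, hy, rfl⟩ := Finset.mem_image.mp hz
      simp only [Finset.mem_filter, Finset.mem_product] at hy
      exact mem4 y.1 y.2 hy.2.1 hy.2.2
  have hlen : (K1 ∪ K2 ∪ K3a ∪ K3b ∪ K4).card ≤ w.length := by
    calc (K1 ∪ K2 ∪ K3a ∪ K3b ∪ K4).card ≤ L.toFinset.card := Finset.card_le_card hsub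
    _ ≤ L.length := L.toFinset_card_le
    _ = w.length := pairsList_length w
  -- injectivity of the image maps
  have hinj2 : Function.Injective
      (fun z : Fin q × Fin p => ((Sum.inr z.1 : SPKV p q), (Sum.inl z.2 : SPKV p q))) := by
    rintro ⟨a, b⟩ ⟨c, d⟩ h
    simp only [Prod.mk.injEq, Sum.inr.injEq, Sum.inl.injEq] at h
    exact Prod.ext h.1 h.2
  -- cardinalities
  have hcard1 : 2 * K1.card = p * (p - 1) := by
    rw [hK1, Finset.card_image_of_injective _ (by
      rintro ⟨a, b⟩ ⟨c, d⟩ h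
      simp only [Prod.mk.injEq, Sum.inl.injEq] at h
      exact Prod.ext h.1 h.2)]
    have := two_mul_card_lt_pairs (Finset.univ : Finset (Fin p))
    rwa [Finset.card_univ, Fintype.card_fin] at this
  have hcard2 : K2.card = q * (p - e) + r := by
    rw [hK2, Finset.card_image_of_injective _ hinj2]
    rw [Finset.card_filter, Finset.sum_product]
    have hinner : ∀ i : Fin q,
        (∑ j : Fin p, if eQ e r i ≤ j.val then 1 else 0) = p - eQ e r i := by
      intro i
      rw [← Finset.card_filter]
      exact card_filter_val_ge (by unfold eQ; split_ifs <;> omega)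
    rw [Finset.sum_congr rfl (fun i _ => hinner i)]
    have hpt : ∀ i : Fin q, p - eQ e r i = (p - e) + (if i.val < r then 1 else 0) := by
      intro i
      unfold eQ
      split_ifs with h
      · have h1 : 1 ≤ e := her (by omega)
        omega
      · omega
    rw [Finset.sum_congr rfl (fun i _ => hpt i), Finset.sum_add_distrib,
      Finset.sum_const, ← Finset.card_filter]
    rw [card_filter_val_lt (le_of_lt hrq)]
    simp [mul_comm]
  have hcard3 : A3.card = ∑ i ∈ B, eQ e r i := by
    rw [hA3, Finset.card_filter, Finset.sum_product]
    have hinner : ∀ i : Fin q,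
        (∑ j : Fin p, if i ∈ B ∧ j.val < eQ e r i then 1 else 0)
          = if i ∈ B then eQ e r i else 0 := by
      intro i
      by_cases hiB : i ∈ B
      · simp only [hiB, true_and, if_true]
        rw [← Finset.card_filter]
        exact card_filter_val_lt (by unfold eQ; split_ifs <;> omega)
      · simp [hiB]
    rw [Finset.sum_congr rfl (fun i _ => hinner i), Finset.sum_ite_mem,
      Finset.univ_inter]
  -- K4 cardinality
  set Q2 : ℕ := ((Finset.univ ×ˢ Finset.univ : Finset (Fin q × Fin q)).filter
      fun z => z.1.val < z.2.val).card with hQ2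
  set W2 : ℕ := ((B ×ˢ B).filter fun z => z.1.val < z.2.val).card with hW2
  have hcard4 : K4.card + W2 = Q2 := by
    rw [hK4, Finset.card_image_of_injective _ (by
      rintro ⟨a, b⟩ ⟨c, d⟩ h
      simp only [Prod.mk.injEq, Sum.inr.injEq] at h
      exact Prod.ext h.1 h.2)]
    have hpart := Finset.card_filter_add_card_filter_not
      (s := (Finset.univ ×ˢ Finset.univ : Finset (Fin q × Fin q)).filter
        fun z => z.1.val < z.2.val)
      (p := fun z => z.1 ∈ B ∧ z.2 ∈ B)
    have e1 : (((Finset.univ ×ˢ Finset.univ : Finset (Fin q × Fin q)).filter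
        fun z => z.1.val < z.2.val).filter fun z => z.1 ∈ B ∧ z.2 ∈ B)
        = ((B ×ˢ B).filter fun z => z.1.val < z.2.val) := by
      ext z
      simp only [Finset.mem_filter, Finset.mem_product, Finset.mem_univ, true_and]
      tauto
    have e2 : (((Finset.univ ×ˢ Finset.univ : Finset (Fin q × Fin q)).filter
        fun z => z.1.val < z.2.val).filter fun z => ¬(z.1 ∈ B ∧ z.2 ∈ B))
        = ((Finset.univ ×ˢ Finset.univ : Finset (Fin q × Fin q)).filter
        fun z => z.1.val < z.2.val ∧ ¬(z.1 ∈ B ∧ z.2 ∈ B)) :=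
      Finset.filter_filter _ _ _
    rw [e1, e2] at hpart
    omega
  have hQ2v : 2 * Q2 = q * (q - 1) := by
    rw [hQ2]
    have := two_mul_card_lt_pairs (Finset.univ : Finset (Fin q))
    rwa [Finset.card_univ, Fintype.card_fin] at this
  have hW2v : 2 * W2 = B.card * (B.card - 1) := two_mul_card_lt_pairs B
  -- SB and cB
  set SB : ℕ := ∑ i ∈ B, eQ e r i with hSB
  set cB : ℕ := (B.filter fun i => i.val < r).card with hcB
  have hcBk : cB ≤ B.card := Finset.card_le_card (Finset.filter_subset _ _)
  have hcBr : cB ≤ r := by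
    have hsub2 : (B.filter fun i => i.val < r)
        ⊆ (Finset.univ.filter fun i : Fin q => i.val < r) :=
      Finset.filter_subset_filter _ (Finset.subset_univ B)
    calc cB ≤ (Finset.univ.filter fun i : Fin q => i.val < r).card :=
          Finset.card_le_card hsub2
      _ = r := card_filter_val_lt (le_of_lt hrq)
  have hSBcB : SB + cB = e * B.card := by
    rw [hSB, hcB, Finset.card_filter, ← Finset.sum_add_distrib]
    have hpt : ∀ i ∈ B, eQ e r i + (if i.val < r then 1 else 0) = e := by
      intro i _
      unfold eQ
      split_ifs with h
      · have h1 : 1 ≤ e := her (by omega)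
        omega
      · omega
    rw [Finset.sum_congr rfl hpt, Finset.sum_const, smul_eq_mul, mul_comm]
  have hkq : B.card ≤ q := by
    calc B.card ≤ (Finset.univ : Finset (Fin q)).card := Finset.card_le_card (Finset.subset_univ B)
      _ = q := by simp
  -- disjointness
  have hdisj : (K1 ∪ K2 ∪ K3a ∪ K3b ∪ K4).card
      = K1.card + K2.card + A3.card + A3.card + K4.card := by
    have c3a : K3a.card = A3.card := Finset.card_image_of_injective _ hinj2
    have c3b : K3b.card = A3.card := Finset.card_image_of_injective _ (by
      rintro ⟨a, b⟩ ⟨c, d⟩ h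
      simp only [Prod.mk.injEq, Sum.inr.injEq, Sum.inl.injEq] at h
      exact Prod.ext h.2 h.1)
    have d12 : Disjoint K1 K2 := by
      rw [Finset.disjoint_left]
      rintro z hz1 hz2
      obtain ⟨y, _, rfl⟩ := Finset.mem_image.mp hz1
      obtain ⟨y', _, hy'⟩ := Finset.mem_image.mp hz2
      exact absurd (congrArg Prod.fst hy') (by simp)
    have d13a : Disjoint (K1 ∪ K2) K3a := by
      rw [Finset.disjoint_left]
      rintro z hz1 hz2
      obtain ⟨y', hy'm, hy'⟩ := Finset.mem_image.mp hz2
      rcases Finset.mem_union.mp hz1 with hz | hz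
      · obtain ⟨y, _, rfl⟩ := Finset.mem_image.mp hz
        exact absurd (congrArg Prod.fst hy') (by simp)
      · obtain ⟨y, hym, rfl⟩ := Finset.mem_image.mp hz
        rw [hA3] at hy'm
        simp only [Finset.mem_filter, Finset.mem_product] at hym hy'm
        have h1 := congrArg Prod.fst hy'
        have h2 := congrArg Prod.snd hy'
        simp only [Sum.inr.injEq, Sum.inl.injEq] at h1 h2
        rw [h1, h2] at hy'm
        omega
    have d13b : Disjoint (K1 ∪ K2 ∪ K3a) K3b := by
      rw [Finset.disjoint_left]
      rintro z hz1 hz2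
      obtain ⟨y', _, hy'⟩ := Finset.mem_image.mp hz2
      rcases Finset.mem_union.mp hz1 with hz | hz
      · rcases Finset.mem_union.mp hz with hz' | hz'
        · obtain ⟨y, _, rfl⟩ := Finset.mem_image.mp hz'
          exact absurd (congrArg Prod.snd hy') (by simp)
        · obtain ⟨y, _, rfl⟩ := Finset.mem_image.mp hz'
          exact absurd (congrArg Prod.snd hy') (by simp)
      · obtain ⟨y, _, rfl⟩ := Finset.mem_image.mp hz
        exact absurd (congrArg Prod.snd hy') (by simp)
    have d14 : Disjoint (K1 ∪ K2 ∪ K3a ∪ K3b) K4 := by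
      rw [Finset.disjoint_left]
      rintro z hz1 hz2
      obtain ⟨y', _, hy'⟩ := Finset.mem_image.mp hz2
      rcases Finset.mem_union.mp hz1 with hz | hz
      · rcases Finset.mem_union.mp hz with hz' | hz'
        · rcases Finset.mem_union.mp hz' with hz'' | hz''
          · obtain ⟨y, _, rfl⟩ := Finset.mem_image.mp hz''
            exact absurd (congrArg Prod.fst hy') (by simp)
          · obtain ⟨y, _, rfl⟩ := Finset.mem_image.mp hz''
            exact absurd (congrArg Prod.snd hy') (by simp)
        · obtain ⟨y, _, rfl⟩ := Finset.mem_image.mp hz'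
          exact absurd (congrArg Prod.snd hy') (by simp)
      · obtain ⟨y, _, rfl⟩ := Finset.mem_image.mp hz
        exact absurd (congrArg Prod.fst hy') (by simp)
    rw [Finset.card_union_of_disjoint d14, Finset.card_union_of_disjoint d13b,
      Finset.card_union_of_disjoint d13a, Finset.card_union_of_disjoint d12,
      c3a, c3b]
  -- final assembly
  have hW2Q2 : W2 ≤ Q2 := by omega
  have hfin := hN B.card cB SB K1.card Q2 W2 hkq hcBk hcBr hSBcB
    (by omega) (by omega) (by omega) hW2Q2
  calc N ≤ K1.card + (q * (p - e) + r) + (SB + SB) + (Q2 - W2) := hfin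
    _ ≤ K1.card + K2.card + A3.card + A3.card + K4.card := by omega
    _ = (K1 ∪ K2 ∪ K3a ∪ K3b ∪ K4).card := hdisj.symm
    _ ≤ w.length := hlen
end MainCount
-- Part 8: arithmetic lemmas
section Arith

/-- Master inequality for the balanced regime. -/
lemma master2 {q e r M k : ℕ} (hq : 0 < q) (h4M : q*(q-1) ≤ 4*M)
    (hqe : q*e = M + r) (hrq : r < q) (hkq : k ≤ q) :
    4 * min k r + k*(k-1) ≤ 4*e*k := by
  rcases Nat.eq_zero_or_pos k with hk0 | hk1
  · subst hk0; simp
  by_cases hq4 : 4 ≤ q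
  · have key : q * (4 * min k r + k*(k-1)) ≤ q * (4*e*k) := by
      have hZ4M : (q:ℤ) * ((q:ℤ)-1) ≤ 4*(M:ℤ) := by
        have h' : ((q*(q-1) : ℕ) : ℤ) ≤ ((4*M : ℕ) : ℤ) := by exact_mod_cast h4M
        push_cast [Nat.cast_sub (show 1 ≤ q from hq)] at h'
        linarith
      have hZqe : (q:ℤ)*(e:ℤ) = (M:ℤ) + (r:ℤ) := by exact_mod_cast hqe
      have hqe4k : 4*(k:ℤ)*((q:ℤ)*(e:ℤ)) = 4*(k:ℤ)*((M:ℤ)+(r:ℤ)) := by rw [hZqe]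
      have hZk1 : (1:ℤ) ≤ k := by exact_mod_cast hk1
      have hZkq : (k:ℤ) ≤ q := by exact_mod_cast hkq
      have hZq4 : (4:ℤ) ≤ q := by exact_mod_cast hq4
      zify [hk1]
      rcases lt_or_ge k r with hkr | hrk
      · have hZkr : (k:ℤ) + 1 ≤ r := by exact_mod_cast hkr
        rw [min_eq_left (by linarith : (k:ℤ) ≤ (r:ℤ))]
        push_cast
        have h1 : (k:ℤ)*((q:ℤ)*((q:ℤ)-1)) ≤ (k:ℤ)*(4*(M:ℤ)) :=
          mul_le_mul_of_nonneg_left hZ4M (by linarith)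
        have hside : (4:ℤ)*q ≤ (q:ℤ)*((q:ℤ)-(k:ℤ)) + 4*(r:ℤ) := by
          nlinarith [mul_nonneg (by linarith : (0:ℤ) ≤ (q:ℤ)-4)
            (by linarith : (0:ℤ) ≤ (q:ℤ)-(k:ℤ))]
        have hside2 : (k:ℤ)*((4:ℤ)*q) ≤ (k:ℤ)*((q:ℤ)*((q:ℤ)-(k:ℤ)) + 4*(r:ℤ)) :=
          mul_le_mul_of_nonneg_left hside (by linarith)
        nlinarith [h1, hside2, hqe4k]
      · have hZrk : (r:ℤ) ≤ k := by exact_mod_cast hrk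
        rw [min_eq_right (by linarith : (r:ℤ) ≤ (k:ℤ))]
        push_cast
        have h1 : (k:ℤ)*((q:ℤ)*((q:ℤ)-1)) ≤ (k:ℤ)*(4*(M:ℤ)) :=
          mul_le_mul_of_nonneg_left hZ4M (by linarith)
        have h3 : (4:ℤ)*(r:ℤ) ≤ (q:ℤ)*(k:ℤ) := by nlinarith
        have hprod : ((q:ℤ)-(k:ℤ))*((q:ℤ)*(k:ℤ) - 4*(r:ℤ)) ≥ 0 :=
          mul_nonneg (by linarith) (by linarith)
        nlinarith [h1, hprod, hqe4k]
    exact Nat.le_of_mul_le_mul_left key hq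
  · interval_cases q <;> interval_cases k <;> interval_cases r <;> omega

/-- Master inequality for the large-`q` regime. -/
lemma master1 {p q k : ℕ} (hq41 : 4*p + 1 ≤ q) (hkq : k ≤ q) :
    4*p*q ≤ 4*p*k + (q*(q-1) - k*(k-1)) := by
  obtain ⟨d, hd⟩ : ∃ d, q = k + d := ⟨q - k, by omega⟩
  have key : k*(k-1) + 4*p*d ≤ q*(q-1) := by
    rcases Nat.eq_zero_or_pos k with hk0 | hk1
    · subst hk0
      simp only [Nat.zero_mul, Nat.zero_add] at hd ⊢
      have h1 : 4*p*d ≤ (q-1)*d := Nat.mul_le_mul_right d (by omega)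
      have h2 : (q-1)*d ≤ (q-1)*q := Nat.mul_le_mul_left _ (by omega)
      have h3 : (q-1)*q = q*(q-1) := Nat.mul_comm _ _
      omega
    · obtain ⟨m, hm⟩ : ∃ m, k = m + 1 := ⟨k - 1, by omega⟩
      have hqq : q*(q-1) = k*(k-1) + d*(q+k-1) := by
        subst hm; subst hd
        have h1 : m + 1 + d - 1 = m + d := by omega
        have h2 : m + 1 - 1 = m := by omega
        have h3 : m + 1 + d + (m+1) - 1 = 2*m + d + 1 := by omega
        rw [h1, h2, h3]
        ring
      rw [hqq]
      have h5 : 4*p ≤ q + k - 1 := by omega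
      have h6 : d * (4*p) ≤ d * (q+k-1) := Nat.mul_le_mul_left d h5
      have h7 : 4*p*d = d*(4*p) := by ring
      omega
  have hkk : k*(k-1) ≤ q*(q-1) := by
    calc k*(k-1) ≤ q*(k-1) := Nat.mul_le_mul_right _ hkq
      _ ≤ q*(q-1) := Nat.mul_le_mul_left _ (by omega)
  have hsplit : 4*p*q = 4*p*k + 4*p*d := by rw [hd]; ring
  omega

end Arith
-- Part 9: final theorem
section Final

lemma ediam_ge_of_walk_bound {p q : ℕ} (N : ℕ) (T0 T1 : SearchTree (SPK p q))
    (h : ∀ w : (rotationGraph (SPK p q)).Walk T0 T1, N ≤ w.length) :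
    (N : ℕ∞) ≤ (rotationGraph (SPK p q)).ediam := by
  refine le_trans ?_ (SimpleGraph.edist_le_ediam (u := T0) (v := T1))
  by_cases htop : (rotationGraph (SPK p q)).edist T0 T1 = ⊤
  · rw [htop]; exact le_top
  · obtain ⟨w, hw⟩ := SimpleGraph.exists_walk_of_edist_ne_top htop
    rw [← hw]
    exact_mod_cast h w

theorem spk_diam_lower' (p q : ℕ) (hp : 0 < p) (hq : 0 < q) :
    (4 * p + 1 ≤ q →
      ((2 * p * q + p * (p - 1) / 2 : ℕ) : ℕ∞) ≤ (rotationGraph (SPK p q)).ediam) ∧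
    (q ≤ 4 * p →
      ((p * q + q * (q - 1) / 4 + p * (p - 1) / 2 : ℕ) : ℕ∞) ≤
        (rotationGraph (SPK p q)).ediam) := by
  constructor
  · -- regime 1 : e = p, r = 0
    intro hq41
    have he : p ≤ p := le_refl p
    have hrq : 0 < q := hq
    have her : (0:ℕ) ≠ 0 → 1 ≤ p := fun h => absurd rfl h
    have he1 : p = 1 → (0:ℕ) ≤ 1 := fun _ => by omega
    have he0 : p = 0 → (0:ℕ) = 0 ∧ q = 1 := fun h => absurd h (by omega)
    apply ediam_ge_of_walk_bound _ (treeT0 hp) (treeT1 hp he hrq her he1 he0)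
    intro w
    apply walk_bound hp hq he hrq her he1 he0 _ _ w
    intro k cB SB P2 Q2 W2 hkq hcbk hcbr hSBe h2P2 h2Q2 h2W2 hWQ
    have hcb0 : cB = 0 := by omega
    have hSB : SB = p * k := by omega
    have hm := master1 hq41 hkq
    have hpk : p * k = k * p := Nat.mul_comm _ _
    have hpq : p * q = q * p := Nat.mul_comm _ _
    have h4pq : 4*p*q = 4*(p*q) := by ring
    have h4pk : 4*p*k = 4*(p*k) := by ring
    have h2pq : 2*p*q = 2*(p*q) := by ring
    omega
  · -- regime 2
    intro hq4
    -- parameters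
    set n : ℕ := q * (q-1) with hn
    set C2 : ℕ := n / 2 with hC2
    set M : ℕ := C2 - C2 / 2 with hM
    obtain ⟨e, he_def⟩ : ∃ x, x = (M + q - 1) / q := ⟨_, rfl⟩
    obtain ⟨r, hr_def⟩ : ∃ x, x = q * e - M := ⟨_, rfl⟩
    -- basic facts
    have f0 : 2 * C2 = n := by
      have hev : Even ((q-1) * ((q-1)+1)) := Nat.even_mul_succ_self (q-1)
      obtain ⟨t, ht⟩ := hev
      have hq1 : (q-1) + 1 = q := by omega
      rw [hq1] at ht
      have hcomm : (q-1) * q = q * (q-1) := Nat.mul_comm _ _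
      omega
    have f1 : n ≤ 4 * M := by omega
    have hdm := Nat.div_add_mod (M + q - 1) q
    have hmod : (M + q - 1) % q < q := Nat.mod_lt _ hq
    rw [← he_def] at hdm
    have hqeM : M ≤ q * e := by omega
    have hqe : q * e = M + r := by omega
    have hrq : r < q := by omega
    -- M ≤ p * q
    have f2 : M ≤ p * q := by
      have hid : q * (q-1) + q = q * q := by
        rw [← Nat.mul_succ]; congr 1; omega
      by_cases h3 : 3 ≤ q
      · have hqq : q * q ≤ q * (4*p) := Nat.mul_le_mul_left q hq4
        have h4pq : q * (4*p) = 4 * (p*q) := by ring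
        omega
      · interval_cases q <;> omega
    have he : e ≤ p := by
      have hlt : q * e < q * (p + 1) := by
        have : q * (p+1) = p*q + q := by ring
        omega
      have := lt_of_mul_lt_mul_left hlt (Nat.zero_le q)
      omega
    have her : r ≠ 0 → 1 ≤ e := by
      intro hr0
      by_contra h
      have he0' : e = 0 := by omega
      have : q * e = 0 := by rw [he0']; ring
      omega
    have he1 : e = 1 → r ≤ 1 := by
      intro he'
      have hqe1 : q * e = q := by rw [he']; ring
      -- M ≥ q - 1
      have hMq : q - 1 ≤ M := by
        by_contra hcon
        push_neg at hcon
        have hid : q * (q-1) + q = q * q := by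
          rw [← Nat.mul_succ]; congr 1; omega
        by_cases h5 : 5 ≤ q
        · have : q * 5 ≤ q * q := Nat.mul_le_mul_left q h5
          omega
        · interval_cases q <;> omega
      omega
    have he0 : e = 0 → r = 0 ∧ q = 1 := by
      intro he'
      have : q * e = 0 := by rw [he']; ring
      have hn0 : M = 0 ∧ r = 0 := by omega
      have : n = 0 := by omega
      rw [hn] at this
      rcases Nat.mul_eq_zero.mp this with h | h <;> omega
    apply ediam_ge_of_walk_bound _ (treeT0 hp) (treeT1 hp he hrq her he1 he0)
    intro w
    apply walk_bound hp hq he hrq her he1 he0 _ _ w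
    intro k cB SB P2 Q2 W2 hkq hcbk hcbr hSBe h2P2 h2Q2 h2W2 hWQ
    have hm := master2 hq f1 hqe hrq hkq
    have hcbmin : cB ≤ min k r := le_min hcbk hcbr
    have h4cb : 4 * cB ≤ 4 * min k r := by omega
    have hm' : 4 * cB + k*(k-1) ≤ 4*e*k :=
      le_trans (Nat.add_le_add_right h4cb _) hm
    have h4ek : 4*e*k = 4*(e*k) := by ring
    have hq_pe : q*(p-e) + q*e = q*p := by
      rw [← Nat.mul_add]; congr 1; omega
    have hpq : p * q = q * p := Nat.mul_comm _ _
    omega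
end Final
/-- If `q ≥ 4p + 1` then `δ(A(SPK p q)) ≥ 2pq + C(p,2)`; otherwise
(`q ≤ 4p`), `δ(A(SPK p q)) ≥ pq + ⌊C(q,2)/2⌋ + C(p,2)`. -/
theorem spk_diam_lower (p q : ℕ) (hp : 0 < p) (hq : 0 < q) :
    (4 * p + 1 ≤ q →
      ((2 * p * q + p * (p - 1) / 2 : ℕ) : ℕ∞) ≤ (rotationGraph (SPK p q)).ediam) ∧
    (q ≤ 4 * p →
      ((p * q + q * (q - 1) / 4 + p * (p - 1) / 2 : ℕ) : ℕ∞) ≤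
        (rotationGraph (SPK p q)).ediam) :=
  spk_diam_lower' p q hp hq
end

section
/- Let p and q be positive integers. Then δ(A(SPK_{p,q})) ≤ 2pq + p(p−1)/2. -/
open SimpleGraph

section SPKAux

open List

attribute [-instance] Sum.instBEq

variable {p q : ℕ}

/-- Valid spine lists encoding search trees on `SPK p q`. -/
structure GoodL (p q : ℕ) (L : List (Fin p ⊕ Fin q)) : Prop where
  nodup : L.Nodup
  memL : ∀ x : Fin p, Sum.inl x ∈ L
  last : ∃ (A : List (Fin p ⊕ Fin q)) (x : Fin p), L = A ++ [Sum.inl x]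

/-- Ancestor relation encoded by a spine list. -/
def ancL (L : List (Fin p ⊕ Fin q)) (u v : Fin p ⊕ Fin q) : Prop :=
  u = v ∨ (u ∈ L ∧ (v ∉ L ∨ L.idxOf u ≤ L.idxOf v))

lemma indexOf_prefix_eq {α : Type} [DecidableEq α] {L Lpre Lpost : List α} {v : α}
    (hnd : L.Nodup) (h : L = Lpre ++ v :: Lpost) : L.idxOf v = Lpre.length := by
  subst h
  have hv : v ∉ Lpre := fun hmem =>
    (List.disjoint_of_nodup_append hnd) hmem (List.mem_cons_self)
  rw [List.idxOf_append_of_notMem hv, List.idxOf_cons_self, Nat.add_zero]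

lemma ancL_set_eq {L Lpre Lpost : List (Fin p ⊕ Fin q)} {v : Fin p ⊕ Fin q}
    (hnd : L.Nodup) (h : L = Lpre ++ v :: Lpost) :
    {u | ancL L v u} = {u | u ∉ Lpre} := by
  have hvL : v ∈ L := by rw [h]; simp
  have hidxv : L.idxOf v = Lpre.length := indexOf_prefix_eq hnd h
  ext u
  simp only [Set.mem_setOf_eq, ancL]
  constructor
  · rintro (rfl | ⟨-, hcase⟩)
    · exact fun hmem => (List.disjoint_of_nodup_append (h ▸ hnd)) hmem (List.mem_cons_self)
    · rcases hcase with huL | hle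
      · exact fun hu => huL (by rw [h]; exact List.mem_append_left _ hu)
      · intro hu
        rw [hidxv, h, List.idxOf_append_of_mem hu] at hle
        have := List.idxOf_lt_length_iff.mpr hu
        omega
  · intro hu
    by_cases huL : u ∈ L
    · refine Or.inr ⟨hvL, Or.inr ?_⟩
      rw [hidxv, h, List.idxOf_append_of_notMem hu]
      omega
    · exact Or.inr ⟨hvL, Or.inl huL⟩

lemma ancL_set_single {L : List (Fin p ⊕ Fin q)} {v : Fin p ⊕ Fin q} (hv : v ∉ L) :
    {u | ancL L v u} = {v} := by
  ext u
  simp only [Set.mem_setOf_eq, ancL, Set.mem_singleton_iff]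
  constructor
  · rintro (rfl | ⟨h, -⟩)
    · rfl
    · exact absurd h hv
  · rintro rfl
    exact Or.inl rfl

/-- The search tree encoded by a valid spine list. -/
def treeOf (L : List (Fin p ⊕ Fin q)) (hL : GoodL p q L) : SearchTree (SPK p q) where
  anc := ancL L
  refl _ := Or.inl rfl
  antisymm u v h1 h2 := by
    rcases h1 with rfl | ⟨hu, h1⟩; · rfl
    rcases h2 with rfl | ⟨hv, h2⟩; · rfl
    rcases h1 with hv' | h1; · exact absurd hv hv'
    rcases h2 with hu' | h2; · exact absurd hu hu'
    exact (List.idxOf_inj hu).mp (Nat.le_antisymm h1 h2)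
  trans u v w h1 h2 := by
    rcases h1 with rfl | ⟨hu, h1⟩; · exact h2
    rcases h2 with rfl | ⟨hv, h2⟩; · exact Or.inr ⟨hu, h1⟩
    rcases h1 with hv' | h1; · exact absurd hv hv'
    rcases h2 with hw | h2
    · exact Or.inr ⟨hu, Or.inl hw⟩
    · exact Or.inr ⟨hu, Or.inr (le_trans h1 h2)⟩
  chain u v w h1 h2 := by
    rcases h1 with rfl | ⟨hu, h1⟩
    · exact Or.inr h2
    rcases h2 with rfl | ⟨hv, h2⟩
    · exact Or.inl (Or.inr ⟨hu, h1⟩)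
    rcases le_total (L.idxOf u) (L.idxOf v) with h | h
    · exact Or.inl (Or.inr ⟨hu, Or.inr h⟩)
    · exact Or.inr (Or.inr ⟨hv, Or.inr h⟩)
  root := by
    obtain ⟨A, x, hAx⟩ := hL.last
    have hne : L ≠ [] := by rw [hAx]; simp
    refine ⟨L.head hne, fun v => ?_⟩
    by_cases hv : L.head hne = v
    · exact Or.inl hv
    refine Or.inr ⟨List.head_mem hne, ?_⟩
    by_cases hvL : v ∈ L
    · refine Or.inr ?_
      cases L with
      | nil => exact absurd rfl hne
      | cons a t => simp [List.idxOf_cons_self]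
    · exact Or.inl hvL
  edge_comparable u v hadj := by
    by_cases hu : u ∈ L <;> by_cases hv : v ∈ L
    · rcases le_total (L.idxOf u) (L.idxOf v) with h | h
      · exact Or.inl (Or.inr ⟨hu, Or.inr h⟩)
      · exact Or.inr (Or.inr ⟨hv, Or.inr h⟩)
    · exact Or.inl (Or.inr ⟨hu, Or.inl hv⟩)
    · exact Or.inr (Or.inr ⟨hv, Or.inl hu⟩)
    · exfalso
      obtain ⟨hne, hleft⟩ := hadj
      cases u with
      | inl a => exact hu (hL.memL a)
      | inr a =>
        cases v with
        | inl b => exact hv (hL.memL b)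
        | inr b => simp at hleft
  desc_connected v := by
    by_cases hv : v ∈ L
    · obtain ⟨A, x, hAx⟩ := hL.last
      have hidx_x : L.idxOf (Sum.inl x) = A.length := indexOf_prefix_eq hL.nodup hAx
      have hlen : L.length = A.length + 1 := by rw [hAx]; simp
      have hanc : ancL L v (Sum.inl x) := by
        refine Or.inr ⟨hv, Or.inr ?_⟩
        have := List.idxOf_lt_length_iff.mpr hv
        omega
      have key : ∀ c : {u | ancL L v u},
          ((SPK p q).induce {u | ancL L v u}).Reachable c ⟨Sum.inl x, hanc⟩ := by
        intro c
        by_cases hc : (c : Fin p ⊕ Fin q) = Sum.inl x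
        · have : c = ⟨Sum.inl x, hanc⟩ := Subtype.ext hc
          rw [this]
        · refine SimpleGraph.Adj.reachable ?_
          show (SPK p q).Adj c (Sum.inl x)
          exact ⟨hc, Or.inr rfl⟩
      haveI : Nonempty {u | ancL L v u} := ⟨⟨v, Or.inl rfl⟩⟩
      exact SimpleGraph.Connected.mk (fun a b => (key a).trans (key b).symm)
    · rw [ancL_set_single hv]
      haveI : Nonempty ({v} : Set (Fin p ⊕ Fin q)) := ⟨⟨v, rfl⟩⟩
      refine SimpleGraph.Connected.mk (fun a b => ?_)
      have hab : a = b := Subtype.ext ((a.2 : (a : Fin p ⊕ Fin q) = v).trans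
        ((b.2 : (b : Fin p ⊕ Fin q) = v)).symm)
      rw [hab]

lemma searchTree_ext {Vt : Type} {G : SimpleGraph Vt} {T T' : SearchTree G}
    (h : T.anc = T'.anc) : T = T' := by
  cases T; cases T'
  cases h
  rfl

lemma GoodL.last_isLeft {L : List (Fin p ⊕ Fin q)} (hG : GoodL p q L)
    {M : List (Fin p ⊕ Fin q)} {z : Fin p ⊕ Fin q} (h : L = M ++ [z]) :
    ∃ y : Fin p, z = Sum.inl y := by
  obtain ⟨A, y, h'⟩ := hG.last
  refine ⟨y, ?_⟩
  have h2 : M ++ [z] = A ++ [Sum.inl y] := by rw [← h, ← h']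
  have e1 : (M ++ [z]).getLast? = some z := List.getLast?_concat
  have e2 : (A ++ [Sum.inl y]).getLast? = some (Sum.inl y) := List.getLast?_concat
  rw [h2, e2] at e1
  exact (Option.some_injective _ e1.symm)

lemma good_of_all_left {M : List (Fin p ⊕ Fin q)} (hnd : M.Nodup)
    (hmem : ∀ x : Fin p, Sum.inl x ∈ M) (hne : M ≠ [])
    (hall : ∀ v ∈ M, v.isLeft = true) : GoodL p q M := by
  refine ⟨hnd, hmem, ?_⟩
  rcases List.eq_nil_or_concat M with rfl | ⟨C, z, hCz⟩
  · exact absurd rfl hne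
  rw [List.concat_eq_append] at hCz
  have hz : z ∈ M := by rw [hCz]; simp
  have := hall z hz
  cases z with
  | inl y => exact ⟨C, y, hCz⟩
  | inr y => simp at this

lemma descSet_treeOf {L : List (Fin p ⊕ Fin q)} (hL : GoodL p q L) (v : Fin p ⊕ Fin q) :
    (treeOf L hL).descSet v = {u | ancL L v u} := rfl

lemma mem_iff_swap {A C : List (Fin p ⊕ Fin q)} {a b u : Fin p ⊕ Fin q} :
    u ∈ A ++ a :: b :: C ↔ u ∈ A ++ b :: a :: C := by
  simp only [List.mem_append, List.mem_cons]
  tauto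

lemma adj_swap {A C : List (Fin p ⊕ Fin q)} {a b : Fin p ⊕ Fin q}
    (h1 : GoodL p q (A ++ a :: b :: C)) (h2 : GoodL p q (A ++ b :: a :: C)) :
    (rotationGraph (SPK p q)).Adj (treeOf _ h1) (treeOf _ h2) := by
  have hbA : b ∉ A := fun hmem =>
    (List.disjoint_of_nodup_append h1.nodup) hmem (by simp)
  have hne : a ≠ b := by
    have h3 := h1.nodup.of_append_right
    rw [List.nodup_cons] at h3
    intro h; exact h3.1 (h ▸ List.mem_cons_self)
  refine ⟨a, b, hne, ?_, ?_, ?_⟩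
  · have hset := ancL_set_eq (v := a) h1.nodup (rfl : A ++ a :: b :: C = A ++ a :: (b :: C))
    show ancL (A ++ a :: b :: C) a b
    have : b ∈ {u | ancL (A ++ a :: b :: C) a u} := by rw [hset]; exact hbA
    exact this
  · show {u | ancL (A ++ b :: a :: C) b u} = {u | ancL (A ++ a :: b :: C) a u}
    rw [ancL_set_eq (v := b) h2.nodup (rfl : A ++ b :: a :: C = A ++ b :: (a :: C)),
      ancL_set_eq (v := a) h1.nodup (rfl : A ++ a :: b :: C = A ++ a :: (b :: C))]
  · intro v hva hvb
    show {u | ancL (A ++ b :: a :: C) v u} = {u | ancL (A ++ a :: b :: C) v u}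
    by_cases hvL : v ∈ A ++ a :: b :: C
    · have : v ∈ A ∨ v ∈ C := by
        simp only [List.mem_append, List.mem_cons] at hvL
        rcases hvL with h | h | h | h
        exacts [Or.inl h, absurd h hva, absurd h hvb, Or.inr h]
      rcases this with hA | hC
      · obtain ⟨A1, A2, rfl⟩ := List.append_of_mem hA
        rw [ancL_set_eq (v := v) h2.nodup
            (show (A1 ++ v :: A2) ++ b :: a :: C = A1 ++ v :: (A2 ++ b :: a :: C) by simp),
          ancL_set_eq (v := v) h1.nodup
            (show (A1 ++ v :: A2) ++ a :: b :: C = A1 ++ v :: (A2 ++ a :: b :: C) by simp)]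
      · obtain ⟨C1, C2, rfl⟩ := List.append_of_mem hC
        rw [ancL_set_eq (v := v) h2.nodup
            (show A ++ b :: a :: (C1 ++ v :: C2) = (A ++ b :: a :: C1) ++ v :: C2 by simp),
          ancL_set_eq (v := v) h1.nodup
            (show A ++ a :: b :: (C1 ++ v :: C2) = (A ++ a :: b :: C1) ++ v :: C2 by simp)]
        ext u
        simp only [Set.mem_setOf_eq, List.mem_append, List.mem_cons]
        tauto
    · have hvL' : v ∉ A ++ b :: a :: C := fun h => hvL (mem_iff_swap.mpr h)
      rw [ancL_set_single hvL', ancL_set_single hvL]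

lemma adj_drop {A : List (Fin p ⊕ Fin q)} {x : Fin q} {y : Fin p}
    (h1 : GoodL p q (A ++ [Sum.inr x, Sum.inl y])) (h2 : GoodL p q (A ++ [Sum.inl y])) :
    (rotationGraph (SPK p q)).Adj (treeOf _ h1) (treeOf _ h2) := by
  have hyA : Sum.inl y ∉ A := fun hmem =>
    (List.disjoint_of_nodup_append h1.nodup) hmem (by simp)
  refine ⟨Sum.inr x, Sum.inl y, by simp, ?_, ?_, ?_⟩
  · show ancL (A ++ [Sum.inr x, Sum.inl y]) (Sum.inr x) (Sum.inl y)
    have hset := ancL_set_eq (v := Sum.inr x) h1.nodup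
      (rfl : A ++ [Sum.inr x, Sum.inl y] = A ++ Sum.inr x :: [Sum.inl y])
    have : Sum.inl y ∈ {u | ancL (A ++ [Sum.inr x, Sum.inl y]) (Sum.inr x) u} := by
      rw [hset]; exact hyA
    exact this
  · show {u | ancL (A ++ [Sum.inl y]) (Sum.inl y) u}
        = {u | ancL (A ++ [Sum.inr x, Sum.inl y]) (Sum.inr x) u}
    rw [ancL_set_eq (v := Sum.inl y) h2.nodup (rfl : A ++ [Sum.inl y] = A ++ Sum.inl y :: []),
      ancL_set_eq (v := Sum.inr x) h1.nodup
        (rfl : A ++ [Sum.inr x, Sum.inl y] = A ++ Sum.inr x :: [Sum.inl y])]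
  · intro v hva hvb
    show {u | ancL (A ++ [Sum.inl y]) v u} = {u | ancL (A ++ [Sum.inr x, Sum.inl y]) v u}
    by_cases hvA : v ∈ A
    · obtain ⟨A1, A2, rfl⟩ := List.append_of_mem hvA
      rw [ancL_set_eq (v := v) h2.nodup
          (show (A1 ++ v :: A2) ++ [Sum.inl y] = A1 ++ v :: (A2 ++ [Sum.inl y]) by simp),
        ancL_set_eq (v := v) h1.nodup
          (show (A1 ++ v :: A2) ++ [Sum.inr x, Sum.inl y]
            = A1 ++ v :: (A2 ++ [Sum.inr x, Sum.inl y]) by simp)]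
    · have hv1 : v ∉ A ++ [Sum.inr x, Sum.inl y] := by
        simp only [List.mem_append, List.mem_cons]
        push_neg
        exact ⟨hvA, hva, hvb, by simp⟩
      have hv2 : v ∉ A ++ [Sum.inl y] := by
        simp only [List.mem_append, List.mem_cons]
        push_neg
        exact ⟨hvA, hvb, by simp⟩
      rw [ancL_set_single hv2, ancL_set_single hv1]

lemma edist_adj_le_one {T T' : SearchTree (SPK p q)}
    (h : (rotationGraph (SPK p q)).Adj T T') :
    (rotationGraph (SPK p q)).edist T T' ≤ 1 :=
  (SimpleGraph.edist_eq_one_iff_adj.mpr h).le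
lemma length_le_left {B : List (Fin p ⊕ Fin q)} (hnd : B.Nodup)
    (hall : ∀ v ∈ B, v.isLeft = true) : B.length ≤ p := by
  classical
  have hsub : B.toFinset ⊆ Finset.univ.image Sum.inl := by
    intro v hv
    rw [List.mem_toFinset] at hv
    cases v with
    | inl a => exact Finset.mem_image.mpr ⟨a, Finset.mem_univ a, rfl⟩
    | inr a => simpa using hall _ hv
  have hcard := Finset.card_le_card hsub
  rw [List.toFinset_card_of_nodup hnd,
    Finset.card_image_of_injective _ Sum.inl_injective, Finset.card_univ,
    Fintype.card_fin] at hcard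
  exact hcard

lemma length_le_right {B : List (Fin p ⊕ Fin q)} (hnd : B.Nodup)
    (hall : ∀ v ∈ B, v.isRight = true) : B.length ≤ q := by
  classical
  have hsub : B.toFinset ⊆ Finset.univ.image Sum.inr := by
    intro v hv
    rw [List.mem_toFinset] at hv
    cases v with
    | inl a => simpa using hall _ hv
    | inr a => exact Finset.mem_image.mpr ⟨a, Finset.mem_univ a, rfl⟩
  have hcard := Finset.card_le_card hsub
  rw [List.toFinset_card_of_nodup hnd,
    Finset.card_image_of_injective _ Sum.inr_injective, Finset.card_univ,
    Fintype.card_fin] at hcard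
  exact hcard

lemma countP_right_le {L : List (Fin p ⊕ Fin q)} (hnd : L.Nodup) :
    L.countP (fun v => v.isRight) ≤ q := by
  rw [List.countP_eq_length_filter]
  exact length_le_right (hnd.filter _) (fun v hv => (List.mem_filter.mp hv).2)

lemma remove_deep (x : Fin q) :
    ∀ (B A L L' : List (Fin p ⊕ Fin q)) (hG : GoodL p q L) (hG' : GoodL p q L'),
      L = A ++ Sum.inr x :: B → L' = A ++ B →
      (rotationGraph (SPK p q)).edist (treeOf L hG) (treeOf L' hG') ≤ (B.length : ℕ∞) := by
  intro B
  induction B with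
  | nil =>
    intro A L L' hG hG' hL hL'
    exfalso
    obtain ⟨y, hy⟩ := hG.last_isLeft (show L = A ++ [Sum.inr x] from hL)
    simp at hy
  | cons b B' ih =>
    intro A L L' hG hG' hL hL'
    subst hL; subst hL'
    by_cases hB' : B' = []
    · subst hB'
      obtain ⟨y, hy⟩ := hG.last_isLeft
        (show A ++ Sum.inr x :: [b] = (A ++ [Sum.inr x]) ++ [b] by simp)
      subst hy
      have hadj := adj_drop (A := A) (x := x) (y := y) hG hG'
      exact (edist_adj_le_one hadj).trans (by simp)
    · obtain ⟨C, z, hCz⟩ := (List.eq_nil_or_concat B').resolve_left hB'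
      rw [List.concat_eq_append] at hCz
      obtain ⟨y, hy⟩ := hG.last_isLeft
        (show A ++ Sum.inr x :: b :: B' = (A ++ Sum.inr x :: b :: C) ++ [z] by rw [hCz]; simp)
      have hperm : (A ++ Sum.inr x :: b :: B').Perm (A ++ b :: Sum.inr x :: B') :=
        List.Perm.append_left A (List.Perm.swap b (Sum.inr x) B')
      have hGm : GoodL p q (A ++ b :: Sum.inr x :: B') := by
        refine ⟨hperm.nodup_iff.mp hG.nodup, fun w => hperm.mem_iff.mp (hG.memL w), ?_⟩
        exact ⟨A ++ b :: Sum.inr x :: C, y, by rw [hCz, hy]; simp⟩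
      have step1 := edist_adj_le_one
        (adj_swap (A := A) (a := Sum.inr x) (b := b) (C := B') hG hGm)
      have step2 := ih (A ++ [b]) (A ++ b :: Sum.inr x :: B') (A ++ b :: B') hGm hG'
        (by simp) (by simp)
      refine le_trans
        (SimpleGraph.edist_triangle (v := treeOf (A ++ b :: Sum.inr x :: B') hGm)) ?_
      refine le_trans (add_le_add step1 step2) ?_
      have : ((B'.length + 1 : ℕ) : ℕ∞) = 1 + (B'.length : ℕ∞) := by push_cast; ring
      rw [List.length_cons, this]

lemma extract_last_inr :
    ∀ (L : List (Fin p ⊕ Fin q)), (∃ y : Fin q, Sum.inr y ∈ L) →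
      ∃ (A : List (Fin p ⊕ Fin q)) (x : Fin q) (B : List (Fin p ⊕ Fin q)),
        L = A ++ Sum.inr x :: B ∧ ∀ v ∈ B, v.isLeft = true := by
  intro L
  induction L with
  | nil => rintro ⟨y, hy⟩; simp at hy
  | cons a t ih =>
    rintro ⟨y, hy⟩
    by_cases ht : ∃ y', Sum.inr y' ∈ t
    · obtain ⟨A, x, B, hsplit, hB⟩ := ih ht
      exact ⟨a :: A, x, B, by rw [hsplit]; rfl, hB⟩
    · have hay : a = Sum.inr y := by
        rcases List.mem_cons.mp hy with h | h
        · exact h.symm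
        · exact absurd ⟨y, h⟩ ht
      refine ⟨[], y, t, by rw [hay]; rfl, fun v hv => ?_⟩
      cases v with
      | inl z => rfl
      | inr z => exact absurd ⟨z, hv⟩ ht

lemma removeAll :
    ∀ (n : ℕ) (L M : List (Fin p ⊕ Fin q)) (hG : GoodL p q L) (hM : GoodL p q M),
      L.countP (fun v => v.isRight) = n → M = L.filter (fun v => v.isLeft) →
      (rotationGraph (SPK p q)).edist (treeOf L hG) (treeOf M hM) ≤ ((p * n : ℕ) : ℕ∞) := by
  intro n
  induction n with
  | zero =>
    intro L M hG hM hcount hMf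
    have hall : ∀ v ∈ L, v.isLeft = true := by
      intro v hv
      have := List.countP_eq_zero.mp hcount v hv
      cases v with
      | inl z => rfl
      | inr z => simp at this
    have hML : M = L := by rw [hMf, List.filter_eq_self.mpr hall]
    subst hML
    exact le_trans (le_of_eq (SimpleGraph.edist_self (G := rotationGraph (SPK p q)))) (by simp)
  | succ n ihn =>
    intro L M hG hM hcount hMf
    have hpos : 0 < L.countP (fun v => v.isRight) := by omega
    obtain ⟨v0, hv0L, hv0⟩ := List.countP_pos_iff.mp hpos
    obtain ⟨x0, hx0⟩ : ∃ y : Fin q, Sum.inr y ∈ L := by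
      cases v0 with
      | inl z => simp at hv0
      | inr z => exact ⟨z, hv0L⟩
    obtain ⟨A, x, B, hLs, hBleft⟩ := extract_last_inr L ⟨x0, hx0⟩
    subst hLs
    have hBne : B ≠ [] := by
      rintro rfl
      obtain ⟨y, hy⟩ := hG.last_isLeft (show A ++ Sum.inr x :: [] = A ++ [Sum.inr x] from rfl)
      simp at hy
    have hsub : (A ++ B).Sublist (A ++ Sum.inr x :: B) :=
      List.Sublist.append_left (List.sublist_cons_self _ _) A
    obtain ⟨C, z, hCz⟩ := (List.eq_nil_or_concat B).resolve_left hBne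
    rw [List.concat_eq_append] at hCz
    obtain ⟨y, hy⟩ := hG.last_isLeft
      (show A ++ Sum.inr x :: B = (A ++ Sum.inr x :: C) ++ [z] by rw [hCz]; simp)
    have hGAB : GoodL p q (A ++ B) := by
      refine ⟨hsub.nodup hG.nodup, ?_, ⟨A ++ C, y, by rw [hCz, hy]; simp⟩⟩
      intro w
      have hw := hG.memL w
      simp only [List.mem_append, List.mem_cons] at hw ⊢
      rcases hw with h | h | h
      · exact Or.inl h
      · exact absurd h (by simp)
      · exact Or.inr h
    have h1 := remove_deep x B A _ _ hG hGAB rfl rfl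
    have hBlen : B.length ≤ p :=
      length_le_left (List.nodup_cons.mp hG.nodup.of_append_right).2 hBleft
    have hc2 : (A ++ B).countP (fun v => v.isRight) = n := by
      rw [List.countP_append] at hcount ⊢
      rw [List.countP_cons] at hcount
      simp at hcount
      omega
    have hf2 : M = (A ++ B).filter (fun v => v.isLeft) := by
      rw [hMf, List.filter_append, List.filter_append, List.filter_cons]
      simp
    have h2 := ihn (A ++ B) M hGAB hM hc2 hf2
    refine le_trans (SimpleGraph.edist_triangle (v := treeOf (A ++ B) hGAB)) ?_
    refine le_trans (add_le_add h1 h2) ?_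
    rw [← Nat.cast_add]
    exact Nat.cast_le.mpr (by rw [Nat.mul_succ]; omega)

lemma bubbleUp :
    ∀ (A R : List (Fin p ⊕ Fin q)) (b : Fin p ⊕ Fin q) (B L L' : List (Fin p ⊕ Fin q))
      (hG : GoodL p q L) (hG' : GoodL p q L'),
      L = R ++ A ++ b :: B → L' = R ++ b :: (A ++ B) →
      (∀ v ∈ L, v.isLeft = true) →
      (rotationGraph (SPK p q)).edist (treeOf L hG) (treeOf L' hG') ≤ (A.length : ℕ∞) := by
  intro A
  induction A with
  | nil =>
    intro R b B L L' hG hG' h1 h2 _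
    subst h1
    have hLL : R ++ [] ++ b :: B = L' := by rw [h2]; simp
    subst hLL
    simpa using le_of_eq (SimpleGraph.edist_self (G := rotationGraph (SPK p q)))
  | cons a A' ih =>
    intro R b B L L' hG hG' h1 h2 hall
    subst h1; subst h2
    have e1 : R ++ (a :: A') ++ b :: B = R ++ a :: (A' ++ b :: B) := by simp
    have hperm : (R ++ (a :: A') ++ b :: B).Perm (R ++ a :: b :: (A' ++ B)) := by
      rw [e1]; exact List.Perm.append_left R (List.perm_middle.cons a)
    have hGm : GoodL p q (R ++ a :: b :: (A' ++ B)) :=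
      good_of_all_left (hperm.nodup_iff.mp hG.nodup)
        (fun w => hperm.mem_iff.mp (hG.memL w)) (by simp)
        (fun v hv => hall v (hperm.mem_iff.mpr hv))
    have step1 := ih (R ++ [a]) b B _ _ hG hGm (by simp) (by simp) hall
    have step2 := edist_adj_le_one
      (adj_swap (A := R) (a := a) (b := b) (C := A' ++ B) hGm hG')
    refine le_trans
      (SimpleGraph.edist_triangle (v := treeOf (R ++ a :: b :: (A' ++ B)) hGm)) ?_
    refine le_trans (add_le_add step1 step2) ?_
    rw [List.length_cons]
    push_cast
    exact le_rfl

lemma tri_step (k a : ℕ) (ha : a ≤ k) :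
    a + k * (k - 1) / 2 ≤ (k + 1) * ((k + 1) - 1) / 2 := by
  rw [Nat.triangle_succ]
  omega

lemma sortCost :
    ∀ (n : ℕ) (M N R L L' : List (Fin p ⊕ Fin q)) (hG : GoodL p q L) (hG' : GoodL p q L'),
      M.length = n → L = R ++ M → L' = R ++ N →
      (∀ v ∈ L, v.isLeft = true) →
      M.Nodup → N.Nodup → (∀ v, v ∈ M ↔ v ∈ N) →
      (rotationGraph (SPK p q)).edist (treeOf L hG) (treeOf L' hG')
        ≤ ((n * (n - 1) / 2 : ℕ) : ℕ∞) := by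
  intro n
  induction n with
  | zero =>
    intro M N R L L' hG hG' hlen h1 h2 _ _ _ hiff
    have hM : M = [] := List.length_eq_zero_iff.mp hlen
    subst hM
    have hN : N = [] := List.eq_nil_iff_forall_not_mem.mpr
      (fun v hv => List.not_mem_nil ((hiff v).mpr hv))
    subst hN
    subst h1
    have hLL : R ++ [] = L' := by rw [h2]
    subst hLL
    simpa using le_of_eq (SimpleGraph.edist_self (G := rotationGraph (SPK p q)))
  | succ n ih =>
    intro M N R L L' hG hG' hlen h1 h2 hall hMnd hNnd hiff
    cases N with
    | nil =>
      exfalso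
      cases M with
      | nil => simp at hlen
      | cons m0 M' => exact List.not_mem_nil ((hiff m0).mp (List.mem_cons_self))
    | cons n0 N' =>
      have hn0M : n0 ∈ M := (hiff n0).mpr (List.mem_cons_self)
      obtain ⟨A, B, hMs⟩ := List.append_of_mem hn0M
      subst hMs; subst h1; subst h2
      have hperm : (R ++ (A ++ n0 :: B)).Perm (R ++ n0 :: (A ++ B)) :=
        List.Perm.append_left R List.perm_middle
      have hGm : GoodL p q (R ++ n0 :: (A ++ B)) :=
        good_of_all_left (hperm.nodup_iff.mp hG.nodup)
          (fun w => hperm.mem_iff.mp (hG.memL w)) (by simp)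
          (fun v hv => hall v (hperm.mem_iff.mpr hv))
      have step1 := bubbleUp A R n0 B _ _ hG hGm (by simp) rfl hall
      have hlen2 : (A ++ B).length = n := by
        simp only [List.length_append, List.length_cons] at hlen ⊢
        omega
      have hn0AB : n0 ∉ A ++ B := by
        intro hmem
        rcases List.mem_append.mp hmem with h | h
        · exact (List.disjoint_of_nodup_append hMnd) h (List.mem_cons_self)
        · exact (List.nodup_cons.mp hMnd.of_append_right).1 h
      have hn0N' : n0 ∉ N' := (List.nodup_cons.mp hNnd).1
      have hiff2 : ∀ v, v ∈ A ++ B ↔ v ∈ N' := by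
        intro v
        constructor
        · intro hv
          have hvM : v ∈ A ++ n0 :: B := by
            rcases List.mem_append.mp hv with h | h
            · exact List.mem_append_left _ h
            · exact List.mem_append_right _ (List.mem_cons_of_mem _ h)
          rcases List.mem_cons.mp ((hiff v).mp hvM) with rfl | h
          · exact absurd hv hn0AB
          · exact h
        · intro hv
          have hvM := (hiff v).mpr (List.mem_cons_of_mem _ hv)
          rcases List.mem_append.mp hvM with h | h
          · exact List.mem_append_left _ h
          · rcases List.mem_cons.mp h with rfl | h
            · exact absurd hv hn0N'
            · exact List.mem_append_right _ h
      have step2 := ih (A ++ B) N' (R ++ [n0]) _ _ hGm hG' hlen2 (by simp) (by simp)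
        (fun v hv => hall v (hperm.mem_iff.mpr hv))
        (((List.sublist_cons_self n0 B).append_left A).nodup hMnd)
        ((List.nodup_cons.mp hNnd).2) hiff2
      have hAle : A.length ≤ n := by
        simp only [List.length_append, List.length_cons] at hlen
        omega
      refine le_trans (SimpleGraph.edist_triangle (v := treeOf (R ++ n0 :: (A ++ B)) hGm)) ?_
      refine le_trans (add_le_add step1 step2) ?_
      rw [← Nat.cast_add]
      exact Nat.cast_le.mpr (tri_step n A.length hAle)
lemma exists_top {α : Type} {r : α → α → Prop} (htr : ∀ a b c, r a b → r b c → r a c)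
    (hrefl : ∀ a, r a a) (tot : ∀ a b, r a b ∨ r b a) :
    ∀ s : Finset α, s.Nonempty → ∃ m ∈ s, ∀ a ∈ s, r a m := by
  classical
  intro s
  induction s using Finset.induction_on with
  | empty => intro h; exact absurd h (by simp)
  | @insert a s ha ih =>
    intro _
    rcases s.eq_empty_or_nonempty with rfl | hs'
    · refine ⟨a, Finset.mem_insert_self _ _, fun b hb => ?_⟩
      rcases Finset.mem_insert.mp hb with rfl | hb
      · exact hrefl b
      · simp at hb
    · obtain ⟨m, hm, hmax⟩ := ih hs'
      rcases tot a m with h | h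
      · refine ⟨m, Finset.mem_insert_of_mem hm, fun b hb => ?_⟩
        rcases Finset.mem_insert.mp hb with rfl | hb
        · exact h
        · exact hmax b hb
      · refine ⟨a, Finset.mem_insert_self _ _, fun b hb => ?_⟩
        rcases Finset.mem_insert.mp hb with rfl | hb
        · exact hrefl b
        · exact htr _ _ _ (hmax b hb) h

lemma sorted_index_iff {α : Type} [DecidableEq α] {r : α → α → Prop} {L : List α}
    (hs : List.Pairwise r L) (anti : ∀ a b, r a b → r b a → a = b)
    (tot : ∀ a b, r a b ∨ r b a) {u v : α} (hu : u ∈ L) (hv : v ∈ L) :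
    r u v ↔ L.idxOf u ≤ L.idxOf v := by
  have hpw := List.pairwise_iff_getElem.mp hs
  constructor
  · intro hr
    by_contra hlt
    push_neg at hlt
    have h2 := hpw _ _ (List.idxOf_lt_length_iff.mpr hv) (List.idxOf_lt_length_iff.mpr hu) hlt
    rw [List.getElem_idxOf, List.getElem_idxOf] at h2
    have heq := anti _ _ hr h2
    subst heq
    exact lt_irrefl _ hlt
  · intro hle
    rcases Nat.eq_or_lt_of_le hle with he | hlt
    · have heq : u = v := (List.idxOf_inj hu).mp he
      subst heq
      rcases tot u u with h | h <;> exact h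
    · have h2 := hpw _ _ (List.idxOf_lt_length_iff.mpr hu) (List.idxOf_lt_length_iff.mpr hv) hlt
      rw [List.getElem_idxOf, List.getElem_idxOf] at h2
      exact h2

lemma classify (hp : 0 < p) (T : SearchTree (SPK p q)) :
    ∃ (L : List (Fin p ⊕ Fin q)) (hG : GoodL p q L), T = treeOf L hG := by
  classical
  have hcompP : ∀ x y : Fin p,
      T.anc (Sum.inl x) (Sum.inl y) ∨ T.anc (Sum.inl y) (Sum.inl x) := by
    intro x y
    by_cases hxy : x = y
    · subst hxy; exact Or.inl (T.refl _)
    · exact T.edge_comparable _ _ ⟨by simp [hxy], Or.inl rfl⟩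
  obtain ⟨m0, -, hmax0⟩ := exists_top
    (r := fun x y : Fin p => T.anc (Sum.inl x) (Sum.inl y))
    (fun a b c hab hbc => T.trans _ _ _ hab hbc) (fun a => T.refl _) hcompP
    Finset.univ ⟨⟨0, hp⟩, Finset.mem_univ _⟩
  set m : Fin p ⊕ Fin q := Sum.inl m0 with hm
  have hmax : ∀ x : Fin p, T.anc (Sum.inl x) m := fun x => hmax0 x (Finset.mem_univ x)
  have hcomp : ∀ v, T.anc v m ∨ T.anc m v := by
    intro v
    cases v with
    | inl x => exact Or.inl (hmax x)
    | inr y => exact T.edge_comparable _ _ ⟨by simp [hm], Or.inr (by simp [hm])⟩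
  have hleaf : ∀ v, ¬ T.anc v m → ∀ u, T.anc v u → u = v := by
    intro v hvm u hvu
    by_contra hne
    have hmv : T.anc m v := (hcomp v).resolve_left hvm
    have hinr : ∀ w, T.anc v w → w.isLeft = false := by
      intro w hw
      cases w with
      | inl z =>
        exfalso
        have h2 : T.anc m (Sum.inl z) := T.trans _ _ _ hmv hw
        have h3 : m = Sum.inl z := T.antisymm _ _ h2 (hmax z)
        rw [← h3] at hw
        exact hvm hw
      | inr z => rfl
    have hnowalk : ∀ (a b : {u | T.anc v u})
        (w : ((SPK p q).induce {u | T.anc v u}).Walk a b), a = b := by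
      intro a b w
      induction w with
      | nil => rfl
      | @cons x y z hadj w ih =>
        exfalso
        have hadj' : (SPK p q).Adj x.1 y.1 := hadj
        rcases hadj'.2 with hl | hl
        · have hx := hinr _ x.2; rw [hx] at hl; exact Bool.noConfusion hl
        · have hy := hinr _ y.2; rw [hy] at hl; exact Bool.noConfusion hl
    obtain ⟨w⟩ := (T.desc_connected v).preconnected ⟨v, T.refl v⟩ ⟨u, hvu⟩
    have h4 := hnowalk _ _ w
    have h5 : v = u := congrArg Subtype.val h4
    exact hne h5.symm
  set enc : (Fin p ⊕ Fin q) → ℕ := Sum.elim (fun a => (a : ℕ)) (fun b => p + (b : ℕ)) with henc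
  have hencinj : ∀ u v, enc u = enc v → u = v := by
    intro u v h
    cases u with
    | inl a =>
      cases v with
      | inl b => simp [henc] at h; exact congrArg Sum.inl (Fin.ext h)
      | inr b => exfalso; simp [henc] at h; have := a.isLt; omega
    | inr a =>
      cases v with
      | inl b => exfalso; simp [henc] at h; have := b.isLt; omega
      | inr b => simp [henc] at h; exact congrArg Sum.inr (Fin.ext h)
  set r' : (Fin p ⊕ Fin q) → (Fin p ⊕ Fin q) → Prop := fun u v =>
    (T.anc u m ∧ T.anc v m ∧ T.anc u v) ∨ (T.anc u m ∧ ¬ T.anc v m) ∨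
    (¬ T.anc u m ∧ ¬ T.anc v m ∧ enc u ≤ enc v) with hr'def
  have htrans : ∀ a b c, r' a b → r' b c → r' a c := by
    intro a b c hab hbc
    simp only [hr'def] at hab hbc ⊢
    rcases hab with ⟨h1, h2, h3⟩ | ⟨h1, h2⟩ | ⟨h1, h2, h3⟩ <;>
      rcases hbc with ⟨g1, g2, g3⟩ | ⟨g1, g2⟩ | ⟨g1, g2, g3⟩
    · exact Or.inl ⟨h1, g2, T.trans _ _ _ h3 g3⟩
    · exact Or.inr (Or.inl ⟨h1, g2⟩)
    · exact absurd h2 g1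
    · exact absurd g1 h2
    · exact absurd g1 h2
    · exact Or.inr (Or.inl ⟨h1, g2⟩)
    · exact absurd g1 h2
    · exact absurd g1 h2
    · exact Or.inr (Or.inr ⟨h1, g2, le_trans h3 g3⟩)
  have hanti : ∀ a b, r' a b → r' b a → a = b := by
    intro a b hab hba
    simp only [hr'def] at hab hba
    rcases hab with ⟨h1, h2, h3⟩ | ⟨h1, h2⟩ | ⟨h1, h2, h3⟩ <;>
      rcases hba with ⟨g1, g2, g3⟩ | ⟨g1, g2⟩ | ⟨g1, g2, g3⟩
    · exact T.antisymm _ _ h3 g3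
    · exact absurd h1 g2
    · exact absurd h2 g1
    · exact absurd g1 h2
    · exact absurd g1 h2
    · exact absurd h1 g2
    · exact absurd g2 h1
    · exact absurd g1 h2
    · exact hencinj _ _ (Nat.le_antisymm h3 g3)
  have htot : ∀ a b, r' a b ∨ r' b a := by
    intro a b
    simp only [hr'def]
    by_cases ha : T.anc a m <;> by_cases hb : T.anc b m
    · rcases T.chain a b m ha hb with h | h
      · exact Or.inl (Or.inl ⟨ha, hb, h⟩)
      · exact Or.inr (Or.inl ⟨hb, ha, h⟩)
    · exact Or.inl (Or.inr (Or.inl ⟨ha, hb⟩))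
    · exact Or.inr (Or.inr (Or.inl ⟨hb, ha⟩))
    · rcases Nat.le_total (enc a) (enc b) with h | h
      · exact Or.inl (Or.inr (Or.inr ⟨ha, hb, h⟩))
      · exact Or.inr (Or.inr (Or.inr ⟨hb, ha, h⟩))
  haveI : DecidableRel r' := fun a b => Classical.propDecidable _
  haveI : IsTrans _ r' := ⟨htrans⟩
  haveI : Std.Antisymm r' := ⟨hanti⟩
  haveI : Std.Total r' := ⟨fun a b => htot a b⟩
  set S : Finset (Fin p ⊕ Fin q) := Finset.univ.filter (fun v => T.anc v m) with hSdef
  set L : List (Fin p ⊕ Fin q) := S.sort r' with hLdef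
  have hLnd : L.Nodup := Finset.sort_nodup S r'
  have hLmem : ∀ w, w ∈ L ↔ T.anc w m := by
    intro w
    rw [hLdef, Finset.mem_sort, hSdef, Finset.mem_filter]
    simp
  have hLsorted : L.Pairwise r' := Finset.pairwise_sort S r'
  have hmL : m ∈ L := (hLmem m).mpr (T.refl m)
  obtain ⟨C, z, hCz⟩ := (List.eq_nil_or_concat L).resolve_left (List.ne_nil_of_mem hmL)
  rw [List.concat_eq_append] at hCz
  have hzm : z = m := by
    have hzL : z ∈ L := by rw [hCz]; simp
    have hzA : T.anc z m := (hLmem z).mp hzL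
    have hm2 := hmL
    rw [hCz] at hm2
    rcases List.mem_append.mp hm2 with hmC | hmz
    · have hpair : ∀ a ∈ C, ∀ b ∈ [z], r' a b := by
        have hsC := hLsorted
        rw [hCz] at hsC
        exact (List.pairwise_append.mp hsC).2.2
      have h1 : r' m z := hpair m hmC z (by simp)
      have h2 : r' z m := by
        simp only [hr'def]
        exact Or.inl ⟨hzA, T.refl m, hzA⟩
      exact hanti z m h2 h1
    · exact (List.mem_singleton.mp hmz).symm
  subst hzm
  have hGood : GoodL p q L := ⟨hLnd, fun x => (hLmem _).mpr (hmax x), ⟨C, m0, by rw [hCz, hm]⟩⟩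
  refine ⟨L, hGood, ?_⟩
  apply searchTree_ext
  show T.anc = ancL L
  funext u v
  apply propext
  have hr'anc : ∀ u v, T.anc u m → T.anc v m → (r' u v ↔ T.anc u v) := by
    intro u v hum hvm
    simp only [hr'def]
    constructor
    · rintro (⟨-, -, h⟩ | ⟨-, h⟩ | ⟨h, -, -⟩)
      · exact h
      · exact absurd hvm h
      · exact absurd hum h
    · intro h
      exact Or.inl ⟨hum, hvm, h⟩
  constructor
  · intro h
    by_cases hum : T.anc u m
    · by_cases hvm : T.anc v m
      · exact Or.inr ⟨(hLmem u).mpr hum, Or.inr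
          ((sorted_index_iff hLsorted hanti htot ((hLmem u).mpr hum)
            ((hLmem v).mpr hvm)).mp ((hr'anc u v hum hvm).mpr h))⟩
      · exact Or.inr ⟨(hLmem u).mpr hum, Or.inl (fun hvL => hvm ((hLmem v).mp hvL))⟩
    · exact Or.inl (hleaf u hum v h).symm
  · rintro (rfl | ⟨huL, hrest⟩)
    · exact T.refl u
    · have hum : T.anc u m := (hLmem u).mp huL
      by_cases hvL : v ∈ L
      · rcases hrest with hnot | hidxle
        · exact absurd hvL hnot
        · exact (hr'anc u v hum ((hLmem v).mp hvL)).mp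
            ((sorted_index_iff hLsorted hanti htot huL hvL).mpr hidxle)
      · have hvm : ¬ T.anc v m := fun hh => hvL ((hLmem v).mpr hh)
        exact T.trans _ _ _ hum ((hcomp v).resolve_left hvm)
lemma mem_filter_left_iff {L : List (Fin p ⊕ Fin q)} (hG : GoodL p q L) (v : Fin p ⊕ Fin q) :
    v ∈ L.filter (fun w => w.isLeft) ↔ v.isLeft = true := by
  rw [List.mem_filter]
  constructor
  · rintro ⟨-, h⟩; exact h
  · intro h
    cases v with
    | inl x => exact ⟨hG.memL x, rfl⟩
    | inr x => simp at h

lemma good_filter {L : List (Fin p ⊕ Fin q)} (hG : GoodL p q L) :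
    GoodL p q (L.filter (fun w => w.isLeft)) := by
  obtain ⟨A, x, hAx⟩ := hG.last
  exact good_of_all_left (hG.nodup.filter _) (fun y => (mem_filter_left_iff hG _).mpr rfl)
    (List.ne_nil_of_mem ((mem_filter_left_iff hG (Sum.inl x)).mpr rfl))
    (fun v hv => (List.mem_filter.mp hv).2)

lemma filter_left_length {L : List (Fin p ⊕ Fin q)} (hG : GoodL p q L) :
    (L.filter (fun w => w.isLeft)).length = p := by
  classical
  have hnd : (L.filter (fun w => w.isLeft)).Nodup := hG.nodup.filter _
  have hset : (L.filter (fun w => w.isLeft)).toFinset = Finset.univ.image Sum.inl := by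
    ext v
    rw [List.mem_toFinset]
    constructor
    · intro hv
      have hvl := (mem_filter_left_iff hG v).mp hv
      cases v with
      | inl a => exact Finset.mem_image.mpr ⟨a, Finset.mem_univ a, rfl⟩
      | inr a => simp at hvl
    · intro hv
      obtain ⟨a, -, rfl⟩ := Finset.mem_image.mp hv
      exact (mem_filter_left_iff hG _).mpr rfl
  have hcard := congrArg Finset.card hset
  rw [List.toFinset_card_of_nodup hnd, Finset.card_image_of_injective _ Sum.inl_injective,
    Finset.card_univ, Fintype.card_fin] at hcard
  exact hcard

end SPKAux

/-- For all positive integers `p` and `q`,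
`δ(A(SPK p q)) ≤ 2pq + C(p,2)`. -/
theorem spk_diam_upper (p q : ℕ) (hp : 0 < p) (hq : 0 < q) :
    (rotationGraph (SPK p q)).ediam ≤ ((2 * p * q + p * (p - 1) / 2 : ℕ) : ℕ∞) := by
  apply SimpleGraph.ediam_le_of_edist_le
  intro T T'
  obtain ⟨L, hG, rfl⟩ := classify hp T
  obtain ⟨L', hG', rfl⟩ := classify hp T'
  have hGM := good_filter hG
  have hGM' := good_filter hG'
  have h1 := removeAll (L.countP (fun v => v.isRight)) L _ hG hGM rfl rfl
  have h1' := removeAll (L'.countP (fun v => v.isRight)) L' _ hG' hGM' rfl rfl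
  have h2 := sortCost p (L.filter (fun w => w.isLeft)) (L'.filter (fun w => w.isLeft)) []
    _ _ hGM hGM' (filter_left_length hG) (by simp) (by simp)
    (fun v hv => (List.mem_filter.mp hv).2)
    (hG.nodup.filter _) (hG'.nodup.filter _)
    (fun v => by rw [mem_filter_left_iff hG, mem_filter_left_iff hG'])
  have hb1 : (rotationGraph (SPK p q)).edist (treeOf L hG)
      (treeOf (L.filter (fun w => w.isLeft)) hGM) ≤ ((p * q : ℕ) : ℕ∞) :=
    h1.trans (Nat.cast_le.mpr (Nat.mul_le_mul_left p (countP_right_le hG.nodup)))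
  have hb2 : (rotationGraph (SPK p q)).edist
      (treeOf (L'.filter (fun w => w.isLeft)) hGM') (treeOf L' hG') ≤ ((p * q : ℕ) : ℕ∞) := by
    rw [SimpleGraph.edist_comm]
    exact h1'.trans (Nat.cast_le.mpr (Nat.mul_le_mul_left p (countP_right_le hG'.nodup)))
  refine le_trans (SimpleGraph.edist_triangle
    (v := treeOf (L.filter (fun w => w.isLeft)) hGM)) ?_
  refine le_trans (add_le_add hb1 (le_trans (SimpleGraph.edist_triangle
    (v := treeOf (L'.filter (fun w => w.isLeft)) hGM')) (add_le_add h2 hb2))) ?_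
  rw [← Nat.cast_add, ← Nat.cast_add]
  refine Nat.cast_le.mpr ?_
  have hr : p * q + (p * (p - 1) / 2 + p * q) = 2 * p * q + p * (p - 1) / 2 := by ring
  exact hr.le
end

section
/- Let p, q be positive integers with q ≥ 4p + 1. Let T1 be the search tree on K_{p,q} whose handle is the path y_1, y_2, …, y_q from the root downward, with the vertices x_1, …, x_p attached as leaves (children of y_q), and let T2 be the search tree whose handle is the path y_q, y_{q−1}, …, y_1 from the root downward, with x_1, …, x_p attached as leaves (children of y_1). Then dist(T1, T2) ≥ 2pq. -/
open SimpleGraph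

section KpqAux

variable {V : Type} {G : SimpleGraph V} {T T' : SearchTree G} {a b : V}

lemma rot_symm (h : IsRotation T T' a b) : IsRotation T' T b a := by
  obtain ⟨hne, hanc, hb, hoth⟩ := h
  have h6 : T'.anc b a := (Set.ext_iff.mp hb a).mpr (T.refl a)
  exact ⟨hne.symm, h6, hb.symm, fun v h1 h2 => (hoth v h2 h1).symm⟩

lemma rot_grow (h : IsRotation T T' a b) {c : V} (hc : T.anc b c) : T.anc a c :=
  T.trans _ _ _ h.2.1 hc

lemma rot_descb (h : IsRotation T T' a b) {c : V} : T'.anc b c ↔ T.anc a c :=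
  Set.ext_iff.mp h.2.2.1 c

lemma rot_shrink (h : IsRotation T T' a b) {c : V} (hc : T'.anc a c) : T.anc a c :=
  (rot_descb h).mp (T'.trans _ _ _ ((rot_descb h).mpr (T.refl a)) hc)

lemma rot_unch (h : IsRotation T T' a b) {v : V} (h1 : v ≠ a) (h2 : v ≠ b) {c : V} :
    T'.anc v c ↔ T.anc v c := Set.ext_iff.mp (h.2.2.2 v h1 h2) c

lemma rot_nobetween (h : IsRotation T T' a b) {c : V} (h1 : c ≠ a) (h2 : c ≠ b)
    (h3 : T.anc a c) (h4 : T.anc c b) : False := by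
  have hcb : T'.anc c b := (rot_unch h h1 h2).mpr h4
  have hbc : T'.anc b c := (rot_descb h).mpr h3
  exact h2 (T'.antisymm c b hcb hbc)

lemma rot_closedB (h : IsRotation T T' a b) {c d : V} (hac : T.anc a c) (hca : c ≠ a)
    (hnbc : ¬ T.anc b c) (hbd : T.anc b d) (hadj : G.Adj c d) : False := by
  rcases T.edge_comparable c d hadj with hcd | hdc
  · rcases T.chain c b d hcd hbd with hcb | hbc
    · have hcb' : c ≠ b := fun he => hnbc (he ▸ T.refl c)
      exact rot_nobetween h hca hcb' hac hcb
    · exact hnbc hbc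
  · exact hnbc (T.trans _ _ _ hbd hdc)

lemma exists_flip (P : ℕ → Prop) : ∀ N, ¬ P 0 → P N → ∃ m, m < N ∧ ¬ P m ∧ P (m+1) := by
  intro N
  induction N with
  | zero => intro h0 hN; exact absurd hN h0
  | succ n ih =>
    intro h0 hN
    by_cases hn : P n
    · obtain ⟨m, hm, h⟩ := ih h0 hn
      exact ⟨m, Nat.lt_succ_of_lt hm, h⟩
    · exact ⟨n, Nat.lt_succ_self n, hn, hN⟩

lemma count_steps (f : ℕ → ℕ) (M : Finset ℕ)
    (hM : ∀ m, f (m+1) ≠ f m → m ∈ M)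
    (h1 : ∀ m, f (m+1) ≤ f m + 1) (h2 : ∀ m, f m ≤ f (m+1) + 1)
    (h0 : f 0 = 0) (k N : ℕ) (hkN : k ≤ N) (hN : f N = 0) :
    2 * f k ≤ M.card := by
  have key : ∀ a d, f (a+d) ≤ f a + (M ∩ Finset.Ico a (a+d)).card ∧
      f a ≤ f (a+d) + (M ∩ Finset.Ico a (a+d)).card := by
    intro a d
    induction d with
    | zero => simp
    | succ n ih =>
      obtain ⟨ih1, ih2⟩ := ih
      have hsub : M ∩ Finset.Ico a (a+n) ⊆ M ∩ Finset.Ico a (a+n+1) :=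
        Finset.inter_subset_inter (Finset.Subset.refl _)
          (Finset.Ico_subset_Ico_right (Nat.le_succ _))
      have hcard : (M ∩ Finset.Ico a (a+n)).card ≤ (M ∩ Finset.Ico a (a+n+1)).card :=
        Finset.card_le_card hsub
      have hstep1 := h1 (a+n)
      have hstep2 := h2 (a+n)
      have hre : a + (n+1) = (a+n)+1 := rfl
      rw [hre]
      by_cases hch : f ((a+n)+1) = f (a+n)
      · rw [hch]; omega
      · have hmem : a + n ∈ M ∩ Finset.Ico a (a+n+1) := by
          refine Finset.mem_inter.mpr ⟨hM _ hch, ?_⟩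
          simp [Finset.mem_Ico]
        have hnot : a + n ∉ M ∩ Finset.Ico a (a+n) := by
          simp [Finset.mem_Ico]
        have hcard2 : (M ∩ Finset.Ico a (a+n)).card + 1 ≤ (M ∩ Finset.Ico a (a+n+1)).card := by
          have hss : insert (a+n) (M ∩ Finset.Ico a (a+n)) ⊆ M ∩ Finset.Ico a (a+n+1) := by
            intro x hx
            rcases Finset.mem_insert.mp hx with rfl | hx
            · exact hmem
            · exact hsub hx
          calc (M ∩ Finset.Ico a (a+n)).card + 1
              = (insert (a+n) (M ∩ Finset.Ico a (a+n))).card :=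
                (Finset.card_insert_of_notMem hnot).symm
            _ ≤ _ := Finset.card_le_card hss
        omega
  have k1 := (key 0 k).1
  have k2 := (key k (N - k)).2
  rw [Nat.zero_add] at k1
  rw [Nat.add_sub_cancel' hkN] at k2
  have hdisj : Disjoint (M ∩ Finset.Ico 0 k) (M ∩ Finset.Ico k N) := by
    have := Finset.Ico_disjoint_Ico_consecutive 0 k N
    exact Finset.disjoint_of_subset_left Finset.inter_subset_right
      (Finset.disjoint_of_subset_right Finset.inter_subset_right this)
  have hun : (M ∩ Finset.Ico 0 k) ∪ (M ∩ Finset.Ico k N) ⊆ M :=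
    Finset.union_subset Finset.inter_subset_left Finset.inter_subset_left
  have := Finset.card_union_of_disjoint hdisj
  have hle := Finset.card_le_card hun
  omega

lemma two_mul_filter_lt_card {α : Type} [DecidableEq α] [LinearOrder α] (R : Finset α) :
    2 * ((R ×ˢ R).filter fun ik => ik.1 < ik.2).card = R.card * R.card - R.card := by
  have himg : ((R ×ˢ R).filter fun ik => ik.2 < ik.1)
      = ((R ×ˢ R).filter fun ik => ik.1 < ik.2).image Prod.swap := by
    ext ⟨i, k⟩
    simp only [Finset.mem_image, Finset.mem_filter, Finset.mem_product, Prod.exists]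
    constructor
    · rintro ⟨⟨hi, hk⟩, hlt⟩
      exact ⟨k, i, ⟨⟨hk, hi⟩, hlt⟩, rfl⟩
    · rintro ⟨x, y, ⟨⟨hx, hy⟩, hlt⟩, heq⟩
      have h1 : y = i := congrArg Prod.fst heq
      have h2 : x = k := congrArg Prod.snd heq
      subst h1; subst h2
      exact ⟨⟨hy, hx⟩, hlt⟩
  have hunion : (((R ×ˢ R).filter fun ik => ik.1 < ik.2) ∪
      ((R ×ˢ R).filter fun ik => ik.2 < ik.1)) = R.offDiag := by
    ext ⟨i, k⟩
    simp only [Finset.mem_union, Finset.mem_filter, Finset.mem_product, Finset.mem_offDiag]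
    constructor
    · rintro (⟨⟨hi, hk⟩, h⟩ | ⟨⟨hi, hk⟩, h⟩)
      · exact ⟨hi, hk, ne_of_lt h⟩
      · exact ⟨hi, hk, (ne_of_lt h).symm⟩
    · rintro ⟨hi, hk, hne⟩
      rcases lt_or_gt_of_ne hne with h | h
      · exact Or.inl ⟨⟨hi, hk⟩, h⟩
      · exact Or.inr ⟨⟨hi, hk⟩, h⟩
  have hdisj : Disjoint ((R ×ˢ R).filter fun ik => ik.1 < ik.2)
      ((R ×ˢ R).filter fun ik => ik.2 < ik.1) := by
    rw [Finset.disjoint_left]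
    rintro ⟨i, k⟩ h1 h2
    simp only [Finset.mem_filter] at h1 h2
    exact absurd h2.2 (not_lt.mpr (le_of_lt h1.2))
  have hcard : (((R ×ˢ R).filter fun ik => ik.2 < ik.1)).card
      = (((R ×ˢ R).filter fun ik => ik.1 < ik.2)).card := by
    rw [himg, Finset.card_image_of_injective _ Prod.swap_injective]
  have hu := Finset.card_union_of_disjoint hdisj
  rw [hunion, Finset.offDiag_card] at hu
  omega

end KpqAux

/-- Let `q ≥ 4p + 1`. Let `T1` be the search tree on `K_{p,q}`
whose handle is the path `y_1, …, y_q` from the root downward with the vertices of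
`P` as leaf children of `y_q`, and `T2` the one with handle `y_q, …, y_1` and the
vertices of `P` as leaf children of `y_1`. Then `dist(T1, T2) ≥ 2pq`. -/
theorem kpq_dist_T1_T2_lower (p q : ℕ) (hp : 0 < p) (hq : 0 < q) (hpq : 4 * p + 1 ≤ q)
    (T1 T2 : SearchTree (completeBipartiteGraph (Fin p) (Fin q)))
    (hT1 : ∀ u v, T1.anc u v ↔ match u, v with
      | .inr i, .inr j => i ≤ j
      | .inr _, .inl _ => True
      | .inl x, .inl y => x = y
      | .inl _, .inr _ => False)
    (hT2 : ∀ u v, T2.anc u v ↔ match u, v with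
      | .inr i, .inr j => j ≤ i
      | .inr _, .inl _ => True
      | .inl x, .inl y => x = y
      | .inl _, .inr _ => False) :
    ((2 * p * q : ℕ) : ℕ∞) ≤
      (rotationGraph (completeBipartiteGraph (Fin p) (Fin q))).edist T1 T2 := by
    classical
  by_cases hreach : (rotationGraph (completeBipartiteGraph (Fin p) (Fin q))).Reachable T1 T2
  swap
  · rw [SimpleGraph.edist_eq_top_of_not_reachable hreach]; exact le_top
  obtain ⟨w, hw⟩ := hreach.exists_walk_length_eq_edist
  rw [← hw, Nat.cast_le]
  set N := w.length with hNdef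
  set S : ℕ → SearchTree (completeBipartiteGraph (Fin p) (Fin q)) := fun m => w.getVert m
    with hSdef
  have hS0 : S 0 = T1 := w.getVert_zero
  have hSge : ∀ m, N ≤ m → S m = T2 := fun m hm => w.getVert_of_length_le hm
  have hex : ∀ m : ℕ, ∃ ab : (Fin p ⊕ Fin q) × (Fin p ⊕ Fin q),
      m < N → IsRotation (S m) (S (m+1)) ab.1 ab.2 := by
    intro m
    by_cases hm : m < N
    · obtain ⟨x, y, hxy⟩ := w.adj_getVert_succ hm
      exact ⟨(x, y), fun _ => hxy⟩
    · exact ⟨(Sum.inl ⟨0, hp⟩, Sum.inl ⟨0, hp⟩), fun h => absurd h hm⟩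
  choose ab hab using hex
  have hadjQP : ∀ (j : Fin q) (x : Fin p),
      (completeBipartiteGraph (Fin p) (Fin q)).Adj (Sum.inr j) (Sum.inl x) :=
    fun j x => Or.inr ⟨rfl, rfl⟩
  have hadjPQ : ∀ (x : Fin p) (j : Fin q),
      (completeBipartiteGraph (Fin p) (Fin q)).Adj (Sum.inl x) (Sum.inr j) :=
    fun x j => Or.inl ⟨rfl, rfl⟩
  set Direct : Fin q → Fin q → Prop := fun i k =>
    ∃ m, m < N ∧ ((ab m).1 = Sum.inr i ∧ (ab m).2 = Sum.inr k ∨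
                  (ab m).1 = Sum.inr k ∧ (ab m).2 = Sum.inr i) with hDirdef
  set Hit : Fin q → Prop := fun j =>
    ∃ m, m ≤ N ∧ ∀ x : Fin p, ¬ (S m).anc (Sum.inr j) (Sum.inl x) with hHitdef
  -- Step 1 : pair dichotomy
  have step1 : ∀ i k : Fin q, i < k → Direct i k ∨ (Hit i ∧ Hit k) := by
    intro i k hik
    by_cases hD : Direct i k
    · exact Or.inl hD
    refine Or.inr ⟨?_, ?_⟩
    · -- Hit i via turn-off of anc (inr i) (inr k)
      obtain ⟨m, hm, hPm, hPm1⟩ := exists_flip (fun m => ¬ (S m).anc (Sum.inr i) (Sum.inr k)) N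
        (not_not.mpr (show (S 0).anc _ _ by rw [hS0]; exact (hT1 _ _).mpr (le_of_lt hik)))
        (show ¬ (S N).anc _ _ by
          rw [hSge N le_rfl]; intro h; exact absurd ((hT2 _ _).mp h) (not_le.mpr hik))
      have hPm' : (S m).anc (Sum.inr i) (Sum.inr k) := not_not.mp hPm
      have hr := hab m hm
      have hai : (ab m).1 = Sum.inr i := by
        by_contra hne
        by_cases hbi : (ab m).2 = Sum.inr i
        · apply hPm1
          rw [← hbi] at hPm' ⊢
          exact (rot_descb hr).mpr (rot_grow hr hPm')
        · exact hPm1 ((rot_unch hr (fun h => hne h.symm) (fun h => hbi h.symm)).mpr hPm')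
      by_cases hbk : (ab m).2 = Sum.inr k
      · exact absurd ⟨m, hm, Or.inl ⟨hai, hbk⟩⟩ hD
      refine ⟨m+1, hm, ?_⟩
      intro x hx
      refine rot_closedB (rot_symm hr) (c := Sum.inr k) (d := Sum.inl x) ?_
        (fun h => hbk h.symm) ?_ ?_ (hadjQP k x)
      · exact (rot_descb hr).mpr (by rw [hai]; exact hPm')
      · rw [hai]; exact hPm1
      · rw [hai]; exact hx
    · -- Hit k via turn-on of anc (inr k) (inr i)
      obtain ⟨m, hm, hPm, hPm1⟩ := exists_flip (fun m => (S m).anc (Sum.inr k) (Sum.inr i)) N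
        (show ¬ (S 0).anc _ _ by
          rw [hS0]; intro h; exact absurd ((hT1 _ _).mp h) (not_le.mpr hik))
        (show (S N).anc _ _ by rw [hSge N le_rfl]; exact (hT2 _ _).mpr (le_of_lt hik))
      have hr := hab m hm
      have hbk : (ab m).2 = Sum.inr k := by
        by_contra hne
        by_cases hak : (ab m).1 = Sum.inr k
        · refine hPm ?_
          rw [← hak] at hPm1 ⊢
          exact rot_shrink hr hPm1
        · exact hPm ((rot_unch hr (fun h => hak h.symm) (fun h => hne h.symm)).mp hPm1)
      have hAi : (S m).anc (ab m).1 (Sum.inr i) := (rot_descb hr).mp (by rw [hbk]; exact hPm1)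
      by_cases hai : (ab m).1 = Sum.inr i
      · exact absurd ⟨m, hm, Or.inl ⟨hai, hbk⟩⟩ hD
      refine ⟨m, le_of_lt hm, ?_⟩
      intro x hx
      exact rot_closedB hr (c := Sum.inr i) (d := Sum.inl x) hAi (fun h => hai h.symm)
        (by rw [hbk]; exact hPm) (by rw [hbk]; exact hx) (hadjQP i x)
  -- Step 2 : each hit vertex needs 2p mixed rotations
  set Mix : Fin q → Finset ℕ := fun j => (Finset.range N).filter
    (fun m => ((ab m).1 = Sum.inr j ∧ (ab m).2.isLeft) ∨
              ((ab m).2 = Sum.inr j ∧ (ab m).1.isLeft)) with hMixdef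
  set e : Fin q → ℕ → ℕ := fun j m =>
    (Finset.univ.filter fun x : Fin p => ¬ (S m).anc (Sum.inr j) (Sum.inl x)).card with hedef
  have he_congr : ∀ (j : Fin q) (m m' : ℕ),
      (∀ x : Fin p, (S m).anc (Sum.inr j) (Sum.inl x) ↔ (S m').anc (Sum.inr j) (Sum.inl x)) →
      e j m = e j m' := by
    intro j m m' h
    apply congrArg Finset.card
    apply Finset.filter_congr
    intro x _
    exact not_congr (h x)
  have step2 : ∀ j : Fin q, Hit j → 2 * p ≤ (Mix j).card := by
    intro j hHitj
    obtain ⟨mstar, hms, hmstar⟩ := hHitj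
    have he0 : e j 0 = 0 := by
      simp only [hedef]
      rw [Finset.card_eq_zero, Finset.filter_eq_empty_iff]
      intro x _
      rw [hS0]
      exact not_not.mpr ((hT1 _ _).mpr trivial)
    have heN : e j N = 0 := by
      simp only [hedef]
      rw [Finset.card_eq_zero, Finset.filter_eq_empty_iff]
      intro x _
      rw [hSge N le_rfl]
      exact not_not.mpr ((hT2 _ _).mpr trivial)
    have hestar : e j mstar = p := by
      simp only [hedef]
      rw [Finset.filter_true_of_mem (fun x _ => hmstar x), Finset.card_univ, Fintype.card_fin]
    have hstep : ∀ m, (e j (m+1) ≤ e j m + 1) ∧ (e j m ≤ e j (m+1) + 1) ∧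
        (e j (m+1) ≠ e j m → m ∈ Mix j) := by
      intro m
      by_cases hm : m < N
      · have hr := hab m hm
        by_cases haj : (ab m).1 = Sum.inr j
        · -- a = inr j : descendant set of j shrinks
          have hbj : (ab m).2 ≠ Sum.inr j := fun h => hr.1 (haj.trans h.symm)
          have hmono : ∀ x : Fin p, ¬ (S m).anc (Sum.inr j) (Sum.inl x) →
              ¬ (S (m+1)).anc (Sum.inr j) (Sum.inl x) := by
            intro x hx hx'
            apply hx
            rw [← haj] at hx' ⊢
            exact rot_shrink hr hx'
          have hsub1 : (Finset.univ.filter fun x : Fin p =>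
                ¬ (S m).anc (Sum.inr j) (Sum.inl x)) ⊆
              (Finset.univ.filter fun x : Fin p =>
                ¬ (S (m+1)).anc (Sum.inr j) (Sum.inl x)) := by
            intro x hx
            simp only [Finset.mem_filter, Finset.mem_univ, true_and] at hx ⊢
            exact hmono x hx
          have hle1 : e j m ≤ e j (m+1) := Finset.card_le_card hsub1
          have hkey : ∀ x : Fin p, ¬ (S (m+1)).anc (Sum.inr j) (Sum.inl x) →
              (S m).anc (Sum.inr j) (Sum.inl x) → (Sum.inl x : Fin p ⊕ Fin q) = (ab m).2 := by
            intro x hx' hx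
            by_contra hne
            refine rot_closedB (rot_symm hr) (c := Sum.inl x) (d := Sum.inr j) ?_ hne ?_ ?_
              (hadjPQ x j)
            · exact (rot_descb hr).mpr (by rw [haj]; exact hx)
            · rw [haj]; exact hx'
            · rw [haj]; exact (S (m+1)).refl _
          have hsub2 : (Finset.univ.filter fun x : Fin p =>
                ¬ (S (m+1)).anc (Sum.inr j) (Sum.inl x)) ⊆
              (Finset.univ.filter fun x : Fin p =>
                ¬ (S m).anc (Sum.inr j) (Sum.inl x)) ∪
              (Finset.univ.filter fun x : Fin p =>
                (Sum.inl x : Fin p ⊕ Fin q) = (ab m).2) := by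
            intro x hx
            simp only [Finset.mem_filter, Finset.mem_univ, true_and, Finset.mem_union] at hx ⊢
            by_cases h2 : (S m).anc (Sum.inr j) (Sum.inl x)
            · exact Or.inr (hkey x hx h2)
            · exact Or.inl h2
          have hcard1 : (Finset.univ.filter fun x : Fin p =>
              (Sum.inl x : Fin p ⊕ Fin q) = (ab m).2).card ≤ 1 := by
            apply Finset.card_le_one.mpr
            intro x hx y hy
            simp only [Finset.mem_filter] at hx hy
            exact Sum.inl_injective (hx.2.trans hy.2.symm)
          have hle2 : e j (m+1) ≤ e j m + 1 := by
            calc e j (m+1) ≤ _ := Finset.card_le_card hsub2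
              _ ≤ _ + _ := Finset.card_union_le _ _
              _ ≤ e j m + 1 := Nat.add_le_add_left hcard1 _
          refine ⟨hle2, by omega, ?_⟩
          intro hne
          rcases hb2 : (ab m).2 with x0 | k
          · refine Finset.mem_filter.mpr ⟨Finset.mem_range.mpr hm, Or.inl ⟨haj, ?_⟩⟩
            rw [hb2]; rfl
          · exfalso
            apply hne
            apply le_antisymm _ hle1
            apply Finset.card_le_card
            intro x hx
            simp only [Finset.mem_filter, Finset.mem_univ, true_and] at hx ⊢
            by_cases h2 : (S m).anc (Sum.inr j) (Sum.inl x)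
            · exact absurd (hkey x hx h2) (by rw [hb2]; exact fun h => Sum.inl_ne_inr h)
            · exact h2
        · by_cases hbj : (ab m).2 = Sum.inr j
          · -- b = inr j: descendant set of j grows
            have hmono : ∀ x : Fin p, ¬ (S (m+1)).anc (Sum.inr j) (Sum.inl x) →
                ¬ (S m).anc (Sum.inr j) (Sum.inl x) := by
              intro x hx' hx
              apply hx'
              rw [← hbj] at hx ⊢
              exact (rot_descb hr).mpr (rot_grow hr hx)
            have hsub1 : (Finset.univ.filter fun x : Fin p =>
                  ¬ (S (m+1)).anc (Sum.inr j) (Sum.inl x)) ⊆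
                (Finset.univ.filter fun x : Fin p =>
                  ¬ (S m).anc (Sum.inr j) (Sum.inl x)) := by
              intro x hx
              simp only [Finset.mem_filter, Finset.mem_univ, true_and] at hx ⊢
              exact hmono x hx
            have hle1 : e j (m+1) ≤ e j m := Finset.card_le_card hsub1
            have hkey : ∀ x : Fin p, ¬ (S m).anc (Sum.inr j) (Sum.inl x) →
                (S (m+1)).anc (Sum.inr j) (Sum.inl x) → (Sum.inl x : Fin p ⊕ Fin q) = (ab m).1 := by
              intro x hx hx'
              by_contra hne
              have hax : (S m).anc (ab m).1 (Sum.inl x) := by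
                refine (rot_descb hr).mp ?_
                rw [← hbj] at hx'
                exact hx'
              exact rot_closedB hr (c := Sum.inl x) (d := Sum.inr j) hax hne
                (by rw [hbj]; exact hx) (by rw [hbj]; exact (S m).refl _) (hadjPQ x j)
            have hsub2 : (Finset.univ.filter fun x : Fin p =>
                  ¬ (S m).anc (Sum.inr j) (Sum.inl x)) ⊆
                (Finset.univ.filter fun x : Fin p =>
                  ¬ (S (m+1)).anc (Sum.inr j) (Sum.inl x)) ∪
                (Finset.univ.filter fun x : Fin p =>
                  (Sum.inl x : Fin p ⊕ Fin q) = (ab m).1) := by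
              intro x hx
              simp only [Finset.mem_filter, Finset.mem_univ, true_and, Finset.mem_union] at hx ⊢
              by_cases h2 : (S (m+1)).anc (Sum.inr j) (Sum.inl x)
              · exact Or.inr (hkey x hx h2)
              · exact Or.inl h2
            have hcard1 : (Finset.univ.filter fun x : Fin p =>
                (Sum.inl x : Fin p ⊕ Fin q) = (ab m).1).card ≤ 1 := by
              apply Finset.card_le_one.mpr
              intro x hx y hy
              simp only [Finset.mem_filter] at hx hy
              exact Sum.inl_injective (hx.2.trans hy.2.symm)
            have hle2 : e j m ≤ e j (m+1) + 1 := by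
              calc e j m ≤ _ := Finset.card_le_card hsub2
                _ ≤ _ + _ := Finset.card_union_le _ _
                _ ≤ e j (m+1) + 1 := Nat.add_le_add_left hcard1 _
            refine ⟨by omega, hle2, ?_⟩
            intro hne
            rcases ha2 : (ab m).1 with x0 | k
            · refine Finset.mem_filter.mpr ⟨Finset.mem_range.mpr hm, Or.inr ⟨hbj, ?_⟩⟩
              rw [ha2]; rfl
            · exfalso
              apply hne
              apply le_antisymm hle1
              apply Finset.card_le_card
              intro x hx
              simp only [Finset.mem_filter, Finset.mem_univ, true_and] at hx ⊢
              by_cases h2 : (S (m+1)).anc (Sum.inr j) (Sum.inl x)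
              · exact absurd (hkey x hx h2) (by rw [ha2]; exact fun h => Sum.inl_ne_inr h)
              · exact h2
          · have heq : e j (m+1) = e j m :=
              he_congr j (m+1) m
                (fun x => rot_unch hr (fun h => haj h.symm) (fun h => hbj h.symm))
            exact ⟨by omega, by omega, fun h => absurd heq h⟩
      · have hSm : S m = T2 := hSge m (le_of_not_gt hm)
        have hSm1 : S (m+1) = T2 := hSge (m+1) (by omega)
        have heq : e j (m+1) = e j m := he_congr _ _ _ (fun x => by rw [hSm, hSm1])
        exact ⟨by omega, by omega, fun h => absurd heq h⟩
    have hcount := count_steps (e j) (Mix j) (fun m hne => ((hstep m).2.2 hne))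
      (fun m => (hstep m).1) (fun m => (hstep m).2.1) he0 mstar N hms heN
    rw [hestar] at hcount
    exact hcount
  -- Step 3 : assemble the counting
  set R : Finset (Fin q) := Finset.univ.filter Hit with hRdef
  set QQ : Finset ℕ := (Finset.range N).filter
    (fun m => (ab m).1.isRight ∧ (ab m).2.isRight) with hQQdef
  have hdisjQM : Disjoint QQ (R.biUnion Mix) := by
    rw [Finset.disjoint_biUnion_right]
    intro j _
    rw [Finset.disjoint_left]
    intro m hmQ hmM
    rw [hQQdef, Finset.mem_filter] at hmQ
    rw [hMixdef, Finset.mem_filter] at hmM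
    rcases hmM.2 with ⟨h1, h2⟩ | ⟨h1, h2⟩
    · rcases hx : (ab m).2 with x0 | k
      · rw [hx] at hmQ; exact absurd hmQ.2.2 (by simp)
      · rw [hx] at h2; exact absurd h2 (by simp)
    · rcases hx : (ab m).1 with x0 | k
      · rw [hx] at hmQ; exact absurd hmQ.2.1 (by simp)
      · rw [hx] at h2; exact absurd h2 (by simp)
  have hdisjMM : ∀ j ∈ R, ∀ j' ∈ R, j ≠ j' → Disjoint (Mix j) (Mix j') := by
    intro j _ j' _ hne
    rw [Finset.disjoint_left]
    intro m hm hm'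
    rw [hMixdef, Finset.mem_filter] at hm hm'
    rcases hm.2 with ⟨h1, h2⟩ | ⟨h1, h2⟩ <;> rcases hm'.2 with ⟨h1', h2'⟩ | ⟨h1', h2'⟩
    · exact hne (Sum.inr_injective (h1.symm.trans h1'))
    · rw [h1] at h2'; exact absurd h2' (by simp)
    · rw [h1] at h2'; exact absurd h2' (by simp)
    · exact hne (Sum.inr_injective (h1.symm.trans h1'))
  have hsumN : QQ.card + ∑ j ∈ R, (Mix j).card ≤ N := by
    have hsubU : QQ ∪ R.biUnion Mix ⊆ Finset.range N := by
      apply Finset.union_subset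
      · rw [hQQdef]; exact Finset.filter_subset _ _
      · intro m hm
        obtain ⟨j, _, hmj⟩ := Finset.mem_biUnion.mp hm
        rw [hMixdef] at hmj
        exact Finset.filter_subset _ _ hmj
    have hcardU := Finset.card_union_of_disjoint hdisjQM
    have hbi : (R.biUnion Mix).card = ∑ j ∈ R, (Mix j).card :=
      Finset.card_biUnion hdisjMM
    have hle := Finset.card_le_card hsubU
    rw [Finset.card_range] at hle
    omega
  set Pall : Finset (Fin q × Fin q) :=
    Finset.univ.filter (fun ik => ik.1 < ik.2) with hPalldef
  set Dset : Finset (Fin q × Fin q) := Pall.filter (fun ik => Direct ik.1 ik.2) with hDsetdef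
  set Nset : Finset (Fin q × Fin q) := Pall.filter (fun ik => ¬ Direct ik.1 ik.2) with hNsetdef
  have hDN : Dset.card + Nset.card = Pall.card :=
    Finset.card_filter_add_card_filter_not _
  have hDQQ : Dset.card ≤ QQ.card := by
    set F : Fin q × Fin q → ℕ := fun ik =>
      if h : Direct ik.1 ik.2 then h.choose else 0 with hFdef
    apply Finset.card_le_card_of_injOn F
    · intro ik hik
      have hd : Direct ik.1 ik.2 := (Finset.mem_filter.mp hik).2
      have hspec := hd.choose_spec
      rw [hFdef]
      simp only [dif_pos hd]
      refine Finset.mem_filter.mpr ⟨Finset.mem_range.mpr hspec.1, ?_⟩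
      rcases hspec.2 with ⟨h1, h2⟩ | ⟨h1, h2⟩ <;> rw [h1, h2] <;> exact ⟨rfl, rfl⟩
    · intro ik hik ik' hik' heq
      have hik0 := Finset.mem_coe.mp hik
      have hik0' := Finset.mem_coe.mp hik'
      have hd : Direct ik.1 ik.2 := (Finset.mem_filter.mp hik0).2
      have hd' : Direct ik'.1 ik'.2 := (Finset.mem_filter.mp hik0').2
      have hlt : ik.1 < ik.2 :=
        (Finset.mem_filter.mp ((Finset.mem_filter.mp hik0).1)).2
      have hlt' : ik'.1 < ik'.2 :=
        (Finset.mem_filter.mp ((Finset.mem_filter.mp hik0').1)).2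
      rw [hFdef] at heq
      simp only [dif_pos hd, dif_pos hd'] at heq
      have hspec := hd.choose_spec
      have hspec' := hd'.choose_spec
      rw [heq] at hspec
      rcases hspec.2 with ⟨h1, h2⟩ | ⟨h1, h2⟩ <;> rcases hspec'.2 with ⟨h1', h2'⟩ | ⟨h1', h2'⟩
      · have e1 : ik.1 = ik'.1 := Sum.inr_injective (h1.symm.trans h1')
        have e2 : ik.2 = ik'.2 := Sum.inr_injective (h2.symm.trans h2')
        exact Prod.ext e1 e2
      · have e1 : ik.1 = ik'.2 := Sum.inr_injective (h1.symm.trans h1')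
        have e2 : ik.2 = ik'.1 := Sum.inr_injective (h2.symm.trans h2')
        exact absurd ((lt_of_lt_of_eq hlt e2).trans (lt_of_lt_of_eq hlt' e1.symm))
          (lt_irrefl ik.1)
      · have e1 : ik.2 = ik'.1 := Sum.inr_injective (h1.symm.trans h1')
        have e2 : ik.1 = ik'.2 := Sum.inr_injective (h2.symm.trans h2')
        exact absurd ((lt_of_lt_of_eq hlt e1).trans (lt_of_lt_of_eq hlt' e2.symm))
          (lt_irrefl ik.1)
      · have e1 : ik.2 = ik'.2 := Sum.inr_injective (h1.symm.trans h1')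
        have e2 : ik.1 = ik'.1 := Sum.inr_injective (h2.symm.trans h2')
        exact Prod.ext e2 e1
  have hNsub : Nset ⊆ (R ×ˢ R).filter fun ik => ik.1 < ik.2 := by
    intro ik hik
    rw [hNsetdef, Finset.mem_filter] at hik
    obtain ⟨hPa, hnd⟩ := hik
    rw [hPalldef, Finset.mem_filter] at hPa
    have hlt := hPa.2
    rcases step1 ik.1 ik.2 hlt with hd | ⟨h1, h2⟩
    · exact absurd hd hnd
    · refine Finset.mem_filter.mpr ⟨Finset.mem_product.mpr ⟨?_, ?_⟩, hlt⟩
      · rw [hRdef]; exact Finset.mem_filter.mpr ⟨Finset.mem_univ _, h1⟩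
      · rw [hRdef]; exact Finset.mem_filter.mpr ⟨Finset.mem_univ _, h2⟩
  have h2Pall : 2 * Pall.card = q * q - q := by
    have h := two_mul_filter_lt_card (Finset.univ : Finset (Fin q))
    rw [Finset.univ_product_univ, Finset.card_univ, Fintype.card_fin] at h
    rw [hPalldef]
    exact h
  have h2N : 2 * Nset.card ≤ R.card * R.card - R.card := by
    rw [← two_mul_filter_lt_card R]
    exact Nat.mul_le_mul_left 2 (Finset.card_le_card hNsub)
  have hsum2 : 2 * p * R.card ≤ ∑ j ∈ R, (Mix j).card := by
    calc 2 * p * R.card = ∑ _j ∈ R, 2 * p := by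
          rw [Finset.sum_const, smul_eq_mul, mul_comm]
      _ ≤ ∑ j ∈ R, (Mix j).card :=
          Finset.sum_le_sum (fun j hj => step2 j ((Finset.mem_filter.mp hj).2))
  have htq : R.card ≤ q := by
    calc R.card ≤ (Finset.univ : Finset (Fin q)).card :=
          Finset.card_le_card (Finset.subset_univ _)
      _ = q := by rw [Finset.card_univ, Fintype.card_fin]
  have hq2 : q ≤ q * q := Nat.le_mul_of_pos_left q hq
  have htt : R.card ≤ R.card * R.card := by
    rcases Nat.eq_zero_or_pos R.card with h | h
    · omega
    · exact Nat.le_mul_of_pos_left _ h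
  have hZ : (2 * p * q : ℤ) ≤ (Dset.card : ℤ) + 2 * p * R.card := by
    have e1 : (2 : ℤ) * Dset.card + 2 * Nset.card + q = q * q := by
      have : 2 * Dset.card + 2 * Nset.card + q = q * q := by omega
      exact_mod_cast this
    have e2 : (2 : ℤ) * Nset.card + R.card ≤ R.card * R.card := by
      have : 2 * Nset.card + R.card ≤ R.card * R.card := by omega
      exact_mod_cast this
    have e3 : (R.card : ℤ) ≤ q := by exact_mod_cast htq
    have e4 : (4 * p + 1 : ℤ) ≤ q := by exact_mod_cast hpq
    have e5 : (0 : ℤ) ≤ p := by positivity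
    nlinarith [mul_nonneg (sub_nonneg.mpr e3)
      (by linarith : (0 : ℤ) ≤ (q : ℤ) + R.card - 1 - 4 * p)]
  have hfinal : 2 * p * q ≤ Dset.card + 2 * p * R.card := by exact_mod_cast hZ
  omega
end
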